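/- arXiv:2406.12988 — 3 statements merged into one kernel-verified Lean document; each statement's English description precedes it below -/
import Mathlib

section
/- Let q ≥ 2 be a real number. For every Schwartz function f : ℝ → ℂ and every x ∈ ℝ, |f(x)|^q ≤ q · (∫_ℝ |f|^{2(q−1)} ds)^{1/2} · (∫_ℝ |f'|² ds)^{1/2}. -/
open MeasureTheory

lemma aux_bound (f : SchwartzMap ℝ ℂ) : ∀ x, ‖f x‖ ≤ ‖f.toBoundedContinuousFunction‖ := by
  intro x
  simpa using f.toBoundedContinuousFunction.norm_coe_le_norm x

lemma aux_integrable (f : SchwartzMap ℝ ℂ) {r : ℝ} (hr : 1 ≤ r) :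
    Integrable (fun s => ‖f s‖ ^ r) := by
  set C : ℝ := max ‖f.toBoundedContinuousFunction‖ 1 with hC
  have hC1 : (1:ℝ) ≤ C := le_max_right _ _
  have hfC : ∀ x, ‖f x‖ ≤ C := fun x => (aux_bound f x).trans (le_max_left _ _)
  have hbound : ∀ x : ℝ, ‖f x‖ ^ r ≤ C ^ (r - 1) * ‖f x‖ := by
    intro x
    rcases eq_or_lt_of_le (norm_nonneg (f x)) with h | h
    · rw [← h, Real.zero_rpow (by linarith : r ≠ 0)]
      positivity
    · calc ‖f x‖ ^ r = ‖f x‖ ^ (r - 1) * ‖f x‖ := by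
            rw [← Real.rpow_add_one h.ne' (r - 1)]; ring_nf
      _ ≤ C ^ (r - 1) * ‖f x‖ :=
          mul_le_mul_of_nonneg_right
            (Real.rpow_le_rpow (norm_nonneg _) (hfC x) (by linarith)) (norm_nonneg _)
  refine ((f.integrable.norm.const_mul (C ^ (r - 1))).mono' ?_ ?_)
  · exact (f.continuous.norm.rpow_const (fun x => Or.inr (by linarith))).aestronglyMeasurable
  · filter_upwards with x
    rw [Real.norm_of_nonneg (Real.rpow_nonneg (norm_nonneg _) r)]
    exact hbound x

lemma aux_memℒp (f : SchwartzMap ℝ ℂ) {r : ℝ} (hr : 1 ≤ r) :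
    MemLp (fun s => ‖f s‖ ^ r) 2 (volume : Measure ℝ) := by
  rw [memLp_two_iff_integrable_sq
    (f.continuous.norm.rpow_const (fun x => Or.inr (by linarith))).aestronglyMeasurable]
  have h := aux_integrable f (r := r * 2) (by linarith)
  refine h.congr ?_
  filter_upwards with x
  rw [Real.rpow_mul (norm_nonneg _), ← Real.rpow_natCast (‖f x‖ ^ r) 2]
  norm_num

lemma aux_hasDerivAt (f : SchwartzMap ℝ ℂ) {q : ℝ} (hq : 2 ≤ q) (s : ℝ) :
    HasDerivAt (fun t => ‖f t‖ ^ q)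
      (q * ‖f s‖ ^ (q - 2) * ((starRingEnd ℂ) (f s) * deriv f s).re) s := by
  have hf' : HasDerivAt f (deriv f s) s := f.differentiableAt.hasDerivAt
  have hre : HasDerivAt (fun t => (f t).re) (deriv f s).re s :=
    Complex.reCLM.hasFDerivAt.comp_hasDerivAt s hf'
  have him : HasDerivAt (fun t => (f t).im) (deriv f s).im s :=
    Complex.imCLM.hasFDerivAt.comp_hasDerivAt s hf'
  have hnormSq : HasDerivAt (fun t => Complex.normSq (f t))
      (2 * ((starRingEnd ℂ) (f s) * deriv f s).re) s := by
    have h := (hre.mul hre).add (him.mul him)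
    exact h.congr_deriv (by simp only [Complex.mul_re, Complex.conj_re, Complex.conj_im]; ring)
  have houter : HasDerivAt (fun x : ℝ => x ^ (q / 2))
      (q / 2 * (Complex.normSq (f s)) ^ (q / 2 - 1)) (Complex.normSq (f s)) :=
    Real.hasDerivAt_rpow_const (Or.inr (by linarith))
  have h := houter.comp s hnormSq
  have hns : ∀ t : ℝ, Complex.normSq (f t) = ‖f t‖ ^ (2:ℕ) := by
    intro t
    rw [← Complex.sq_norm]
  have key : ∀ (t : ℝ) (e : ℝ), (Complex.normSq (f t)) ^ e = ‖f t‖ ^ (2 * e) := by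
    intro t e
    rw [hns t, ← Real.rpow_natCast ‖f t‖ 2, ← Real.rpow_mul (norm_nonneg _)]
    norm_num
  have e1 : (fun t => ‖f t‖ ^ q) = (fun x : ℝ => x ^ (q / 2)) ∘ fun t => Complex.normSq (f t) := by
    funext t
    simp only [Function.comp_apply]
    rw [key t (q / 2)]
    congr 1; ring
  rw [e1]
  refine h.congr_deriv ?_
  · rw [key s (q / 2 - 1)]
    have : 2 * (q / 2 - 1) = q - 2 := by ring
    rw [this]; ring

/-- One-dimensional Agmon-type inequality with first derivative. -/
theorem stmt_1 (q : ℝ) (hq : 2 ≤ q) (f : SchwartzMap ℝ ℂ) (x : ℝ) :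
    ‖f x‖ ^ q ≤
      q * (∫ s : ℝ, ‖f s‖ ^ (2 * (q - 1))) ^ ((1 : ℝ) / 2)
        * (∫ s : ℝ, ‖deriv (fun t => f t) s‖ ^ 2) ^ ((1 : ℝ) / 2) := by
  have hq0 : (0:ℝ) < q := by linarith
  set fd : SchwartzMap ℝ ℂ := SchwartzMap.derivCLM ℝ ℂ f with hfd
  have hfd_apply : ∀ s, fd s = deriv f s := fun s => rfl
  set F : ℝ → ℝ := fun s => ‖f s‖ ^ (q - 1) with hF
  set G : ℝ → ℝ := fun s => ‖deriv f s‖ with hG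
  set D : ℝ → ℝ := fun s => q * ‖f s‖ ^ (q - 2) * ((starRingEnd ℂ) (f s) * deriv f s).re
    with hD
  have hFnn : ∀ s, 0 ≤ F s := fun s => Real.rpow_nonneg (norm_nonneg _) _
  have hGnn : ∀ s, 0 ≤ G s := fun s => norm_nonneg _
  -- Memℒp facts
  have hF2 : MemLp F 2 (volume : Measure ℝ) := aux_memℒp f (by linarith)
  have hG2 : MemLp G 2 (volume : Measure ℝ) := by
    have : G = fun s => ‖fd s‖ ^ (1:ℝ) := by
      funext s; rw [hfd_apply, Real.rpow_one]
    rw [this]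
    exact aux_memℒp fd le_rfl
  -- pointwise bound on D
  have hDbound : ∀ s, |D s| ≤ q * (F s * G s) := by
    intro s
    have hre : |((starRingEnd ℂ) (f s) * deriv f s).re| ≤ ‖f s‖ * ‖deriv f s‖ := by
      calc |((starRingEnd ℂ) (f s) * deriv f s).re| ≤ ‖(starRingEnd ℂ) (f s) * deriv f s‖ :=
            Complex.abs_re_le_norm _
        _ = ‖f s‖ * ‖deriv f s‖ := by rw [norm_mul, RingHomIsometric.norm_map]
    have hpow : ‖f s‖ ^ (q - 2) * ‖f s‖ = ‖f s‖ ^ (q - 1) := by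
      rcases eq_or_lt_of_le (norm_nonneg (f s)) with h | h
      · rw [← h, Real.zero_rpow (by linarith : q - 1 ≠ 0), mul_zero]
      · rw [← Real.rpow_add_one h.ne' (q - 2)]; ring_nf
    calc |D s| = q * ‖f s‖ ^ (q - 2) * |((starRingEnd ℂ) (f s) * deriv f s).re| := by
          rw [hD, abs_mul, abs_of_nonneg (by positivity : (0:ℝ) ≤ q * ‖f s‖ ^ (q - 2))]
      _ ≤ q * ‖f s‖ ^ (q - 2) * (‖f s‖ * ‖deriv f s‖) :=
          mul_le_mul_of_nonneg_left hre (by positivity)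
      _ = q * (F s * G s) := by rw [hF, hG]; rw [show q * ‖f s‖ ^ (q-2) * (‖f s‖ * ‖deriv f s‖)
            = q * ((‖f s‖ ^ (q-2) * ‖f s‖) * ‖deriv f s‖) by ring, hpow]
  -- integrability
  have hFG : Integrable (fun s => F s * G s) (volume : Measure ℝ) := by
    have h := hG2.smul (φ := F) (r := 1) hF2
    rw [memLp_one_iff_integrable] at h
    exact h.congr (by filter_upwards with s; simp [smul_eq_mul])
  have hqFG : Integrable (fun s => q * (F s * G s)) (volume : Measure ℝ) := hFG.const_mul q
  have hDcont : Continuous D := by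
    have h1 : Continuous fun s => ‖f s‖ ^ (q - 2) :=
      f.continuous.norm.rpow_const (fun s => Or.inr (by linarith))
    have h2 : Continuous fun s => ((starRingEnd ℂ) (f s) * deriv f s).re := by
      have : Continuous (deriv (f : ℝ → ℂ)) := by
        have := fd.continuous
        exact this
      exact (Complex.continuous_re.comp
        ((Complex.continuous_conj.comp f.continuous).mul this))
    exact (continuous_const.mul h1).mul h2
  have hDint : Integrable D (volume : Measure ℝ) := by
    refine hqFG.mono' hDcont.aestronglyMeasurable ?_
    filter_upwards with s
    rw [Real.norm_eq_abs]
    exact hDbound s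
  -- limit at infinity
  have htend : Filter.Tendsto (fun t => ‖f t‖ ^ q) Filter.atTop (nhds 0) := by
    have h0 : Filter.Tendsto (f : ℝ → ℂ) Filter.atTop (nhds 0) := by
      have := zero_at_infty (f : SchwartzMap ℝ ℂ)
      exact this.mono_left (by rw [cocompact_eq_atBot_atTop]; exact le_sup_right)
    have h1 : Filter.Tendsto (fun t => ‖f t‖) Filter.atTop (nhds 0) := by
      simpa using h0.norm
    have h2 := (Real.continuousAt_rpow_const 0 q (Or.inr hq0.le)).tendsto.comp h1
    simpa [Function.comp_def, Real.zero_rpow hq0.ne'] using h2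
  -- FTC
  have key : ∫ s in Set.Ioi x, D s = 0 - ‖f x‖ ^ q :=
    integral_Ioi_of_hasDerivAt_of_tendsto' (fun y _ => aux_hasDerivAt f hq y)
      hDint.integrableOn htend
  have step1 : ‖f x‖ ^ q = ∫ s in Set.Ioi x, (-D s) := by
    rw [integral_neg]; linarith [key]
  have step2 : (∫ s in Set.Ioi x, (-D s)) ≤ ∫ s in Set.Ioi x, q * (F s * G s) := by
    refine setIntegral_mono_on hDint.neg.integrableOn hqFG.integrableOn
      measurableSet_Ioi (fun s _ => ?_)
    calc -D s ≤ |D s| := neg_le_abs _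
      _ ≤ q * (F s * G s) := hDbound s
  have step3 : (∫ s in Set.Ioi x, q * (F s * G s)) ≤ ∫ s, q * (F s * G s) :=
    setIntegral_le_integral hqFG
      (by filter_upwards with s; positivity)
  have holder : (∫ s, F s * G s) ≤
      (∫ s, F s ^ (2:ℝ)) ^ ((1:ℝ)/2) * (∫ s, G s ^ (2:ℝ)) ^ ((1:ℝ)/2) := by
    have hconj : (2:ℝ).HolderConjugate 2 := by rw [Real.holderConjugate_iff]; norm_num
    have h2 : ENNReal.ofReal (2:ℝ) = 2 := by norm_num [ENNReal.ofReal_ofNat]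
    have := integral_mul_le_Lp_mul_Lq_of_nonneg (μ := volume) hconj
      (Filter.Eventually.of_forall hFnn) (Filter.Eventually.of_forall hGnn)
      (h2 ▸ hF2) (h2 ▸ hG2)
    exact this
  have hFsq : (∫ s, F s ^ (2:ℝ)) = ∫ s : ℝ, ‖f s‖ ^ (2 * (q - 1)) := by
    congr 1; funext s
    rw [hF, ← Real.rpow_mul (norm_nonneg _), mul_comm (q-1) 2]
  have hGsq : (∫ s, G s ^ (2:ℝ)) = ∫ s : ℝ, ‖deriv (fun t => f t) s‖ ^ 2 := by
    congr 1; funext s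
    rw [hG, ← Real.rpow_natCast ‖deriv (fun t => f t) s‖ 2]
    norm_num
  calc ‖f x‖ ^ q = ∫ s in Set.Ioi x, (-D s) := step1
    _ ≤ ∫ s in Set.Ioi x, q * (F s * G s) := step2
    _ ≤ ∫ s, q * (F s * G s) := step3
    _ = q * ∫ s, F s * G s := integral_const_mul q _
    _ ≤ q * ((∫ s : ℝ, ‖f s‖ ^ (2 * (q - 1))) ^ ((1:ℝ)/2)
          * (∫ s : ℝ, ‖deriv (fun t => f t) s‖ ^ 2) ^ ((1:ℝ)/2)) := by
        rw [← hFsq, ← hGsq]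
        exact mul_le_mul_of_nonneg_left holder hq0.le
    _ = q * (∫ s : ℝ, ‖f s‖ ^ (2 * (q - 1))) ^ ((1:ℝ)/2)
          * (∫ s : ℝ, ‖deriv (fun t => f t) s‖ ^ 2) ^ ((1:ℝ)/2) := by ring
end

section
/- Let p > 2 and let u : ℝ² → ℂ be a Schwartz function. Then the map λ ↦ E(u_λ) is differentiable on (0,∞) and its derivative at λ = 1 equals (1/2)·Q(u), where Q(u) = X(u) + Y(u) − (3(p−2)/(4p))·P(u). -/
open MeasureTheory

noncomputable section

/-- Partial derivative in the first (x) variable. -/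
def pdx (u : ℝ × ℝ → ℂ) : ℝ × ℝ → ℂ := fun z => deriv (fun x => u (x, z.2)) z.1

/-- Partial derivative in the second (y) variable. -/
def pdy (u : ℝ × ℝ → ℂ) : ℝ × ℝ → ℂ := fun z => deriv (fun y => u (z.1, y)) z.2

/-- Second partial derivative in x. -/
def pdxx (u : ℝ × ℝ → ℂ) : ℝ × ℝ → ℂ := pdx (pdx u)

/-- Second partial derivative in y. -/
def pdyy (u : ℝ × ℝ → ℂ) : ℝ × ℝ → ℂ := pdy (pdy u)

/-- Fourth partial derivative in y. -/
def pdyyyy (u : ℝ × ℝ → ℂ) : ℝ × ℝ → ℂ := pdy (pdy (pdy (pdy u)))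

/-- X(u) = ∫ |∂ₓ u|². -/
def Xf (u : ℝ × ℝ → ℂ) : ℝ := ∫ z : ℝ × ℝ, ‖pdx u z‖ ^ 2

/-- Y(u) = ∫ |∂_yy u|². -/
def Yf (u : ℝ × ℝ → ℂ) : ℝ := ∫ z : ℝ × ℝ, ‖pdyy u z‖ ^ 2

/-- M(u) = ∫ |u|². -/
def Mf (u : ℝ × ℝ → ℂ) : ℝ := ∫ z : ℝ × ℝ, ‖u z‖ ^ 2

/-- P(u) = ∫ |u|ᵖ. -/
def Pf (p : ℝ) (u : ℝ × ℝ → ℂ) : ℝ := ∫ z : ℝ × ℝ, ‖u z‖ ^ p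

/-- Energy E(u) = X(u)/2 + Y(u)/2 − P(u)/p. -/
def Ef (p : ℝ) (u : ℝ × ℝ → ℂ) : ℝ := Xf u / 2 + Yf u / 2 - Pf p u / p

/-- Action J_ω(u) = X(u)/2 + Y(u)/2 + (ω/2) M(u) − P(u)/p. -/
def Jf (p ω : ℝ) (u : ℝ × ℝ → ℂ) : ℝ := Xf u / 2 + Yf u / 2 + ω / 2 * Mf u - Pf p u / p

/-- Standing wave equation −∂ₓₓu + ∂_yyyy u + ω u = |u|^{p−2} u pointwise. -/
def IsStandingWave (p ω : ℝ) (u : ℝ × ℝ → ℂ) : Prop :=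
  ∀ z : ℝ × ℝ, -pdxx u z + pdyyyy u z + (ω : ℂ) * u z = ((‖u z‖ ^ (p - 2) : ℝ) : ℂ) * u z

/-- Mass-preserving anisotropic scaling u_λ(x,y) = λ^{3/8} u(λ^{1/2} x, λ^{1/4} y). -/
def uscale (l : ℝ) (u : ℝ × ℝ → ℂ) : ℝ × ℝ → ℂ :=
  fun z => ((l ^ ((3 : ℝ) / 8) : ℝ) : ℂ) * u (l ^ ((1 : ℝ) / 2) * z.1, l ^ ((1 : ℝ) / 4) * z.2)

end

open scoped NNReal ENNReal

private lemma smul_prod_smul' (c d : ℝ≥0) :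
    (((c : ℝ≥0∞) • (volume : Measure ℝ)).prod ((d : ℝ≥0∞) • (volume : Measure ℝ)))
      = ((c * d : ℝ≥0) : ℝ≥0∞) • ((volume : Measure ℝ).prod volume) := by
  haveI : SigmaFinite ((c : ℝ≥0∞) • (volume : Measure ℝ)) := by
    rw [← ENNReal.smul_def]; infer_instance
  haveI : SigmaFinite ((d : ℝ≥0∞) • (volume : Measure ℝ)) := by
    rw [← ENNReal.smul_def]; infer_instance
  refine Measure.prod_eq fun s t hs ht => ?_
  simp [Measure.prod_prod, Measure.smul_apply, smul_eq_mul]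
  ring

private lemma cov_scale {s t : ℝ} (hs : 0 < s) (ht : 0 < t) (g : ℝ × ℝ → ℝ)
    (hg : Continuous g) :
    ∫ z : ℝ × ℝ, g (s * z.1, t * z.2) = s⁻¹ * t⁻¹ * ∫ z : ℝ × ℝ, g z := by
  have hmeas : Measurable fun z : ℝ × ℝ => (s * z.1, t * z.2) :=
    (measurable_fst.const_mul s).prod (measurable_snd.const_mul t)
  have hmap : Measure.map (fun z : ℝ × ℝ => (s * z.1, t * z.2)) volume
      = ((s⁻¹ * t⁻¹).toNNReal : ℝ≥0∞) • volume := by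
    have h1 : (fun z : ℝ × ℝ => (s * z.1, t * z.2))
        = Prod.map (fun x => s * x) (fun y => t * y) := rfl
    rw [h1, Measure.volume_eq_prod,
      ← Measure.map_prod_map _ _ (measurable_const_mul s) (measurable_const_mul t),
      Real.map_volume_mul_left hs.ne', Real.map_volume_mul_left ht.ne']
    rw [abs_of_pos (inv_pos.2 hs), abs_of_pos (inv_pos.2 ht),
      show ENNReal.ofReal s⁻¹ = ((s⁻¹).toNNReal : ℝ≥0∞) from rfl,
      show ENNReal.ofReal t⁻¹ = ((t⁻¹).toNNReal : ℝ≥0∞) from rfl,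
      smul_prod_smul', ← Measure.volume_eq_prod]
    congr 1
    rw [← Real.toNNReal_mul (le_of_lt (inv_pos.2 hs))]
  calc ∫ z : ℝ × ℝ, g (s * z.1, t * z.2)
      = ∫ w, g w ∂(Measure.map (fun z : ℝ × ℝ => (s * z.1, t * z.2)) volume) :=
        (integral_map hmeas.aemeasurable hg.aestronglyMeasurable).symm
    _ = s⁻¹ * t⁻¹ * ∫ z, g z := by
        rw [hmap, integral_smul_measure]
        simp [Real.coe_toNNReal _ (le_of_lt (mul_pos (inv_pos.2 hs) (inv_pos.2 ht))),
          smul_eq_mul]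

private lemma pdx_scale (f : SchwartzMap (ℝ × ℝ) ℂ) (c s t : ℝ) :
    pdx (fun z => (c : ℂ) * f (s * z.1, t * z.2))
      = fun z => ((c * s : ℝ) : ℂ) * fderiv ℝ f (s * z.1, t * z.2) (1, 0) := by
  funext z
  have h1 : HasDerivAt (fun x : ℝ => (s * x, t * z.2)) ((s, 0) : ℝ × ℝ) z.1 := by
    simpa using ((hasDerivAt_id z.1).const_mul s).prodMk (hasDerivAt_const z.1 (t * z.2))
  have hu : HasFDerivAt (⇑f) (fderiv ℝ f (s * z.1, t * z.2)) (s * z.1, t * z.2) :=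
    f.differentiableAt.hasFDerivAt
  have h2 : HasDerivAt (fun x : ℝ => f (s * x, t * z.2))
      (fderiv ℝ f (s * z.1, t * z.2) ((s, 0) : ℝ × ℝ)) z.1 := hu.comp_hasDerivAt z.1 h1
  have h3 := h2.const_mul (c : ℂ)
  show deriv (fun x => (c : ℂ) * f (s * x, t * z.2)) z.1 = _
  rw [h3.deriv]
  have e : ((s, 0) : ℝ × ℝ) = s • ((1, 0) : ℝ × ℝ) := by simp
  rw [e, ContinuousLinearMap.map_smul, Complex.real_smul]
  push_cast
  ring

private lemma pdy_scale (f : SchwartzMap (ℝ × ℝ) ℂ) (c s t : ℝ) :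
    pdy (fun z => (c : ℂ) * f (s * z.1, t * z.2))
      = fun z => ((c * t : ℝ) : ℂ) * fderiv ℝ f (s * z.1, t * z.2) (0, 1) := by
  funext z
  have h1 : HasDerivAt (fun y : ℝ => (s * z.1, t * y)) ((0, t) : ℝ × ℝ) z.2 := by
    simpa using (hasDerivAt_const z.2 (s * z.1)).prodMk ((hasDerivAt_id z.2).const_mul t)
  have hu : HasFDerivAt (⇑f) (fderiv ℝ f (s * z.1, t * z.2)) (s * z.1, t * z.2) :=
    f.differentiableAt.hasFDerivAt
  have h2 : HasDerivAt (fun y : ℝ => f (s * z.1, t * y))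
      (fderiv ℝ f (s * z.1, t * z.2) ((0, t) : ℝ × ℝ)) z.2 := hu.comp_hasDerivAt z.2 h1
  have h3 := h2.const_mul (c : ℂ)
  show deriv (fun y => (c : ℂ) * f (s * z.1, t * y)) z.2 = _
  rw [h3.deriv]
  have e : ((0, t) : ℝ × ℝ) = t • ((0, 1) : ℝ × ℝ) := by simp
  rw [e, ContinuousLinearMap.map_smul, Complex.real_smul]
  push_cast
  ring

private lemma pdx_schwartz (f : SchwartzMap (ℝ × ℝ) ℂ) :
    pdx (⇑f) = fun z => fderiv ℝ f z (1, 0) := by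
  funext z
  have h1 : HasDerivAt (fun x : ℝ => ((x, z.2) : ℝ × ℝ)) ((1, 0) : ℝ × ℝ) z.1 :=
    (hasDerivAt_id z.1).prodMk (hasDerivAt_const z.1 z.2)
  have h2 : HasDerivAt (fun x : ℝ => f (x, z.2)) (fderiv ℝ f (z.1, z.2) ((1,0) : ℝ × ℝ)) z.1 :=
    (f.differentiableAt.hasFDerivAt).comp_hasDerivAt _ h1
  show deriv (fun x => f (x, z.2)) z.1 = _
  rw [h2.deriv]

private lemma pdy_schwartz (f : SchwartzMap (ℝ × ℝ) ℂ) :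
    pdy (⇑f) = fun z => fderiv ℝ f z (0, 1) := by
  funext z
  have h1 : HasDerivAt (fun y : ℝ => ((z.1, y) : ℝ × ℝ)) ((0, 1) : ℝ × ℝ) z.2 :=
    (hasDerivAt_const z.2 z.1).prodMk (hasDerivAt_id z.2)
  have h2 : HasDerivAt (fun y : ℝ => f (z.1, y)) (fderiv ℝ f (z.1, z.2) ((0,1) : ℝ × ℝ)) z.2 :=
    (f.differentiableAt.hasFDerivAt).comp_hasDerivAt _ h1
  show deriv (fun y => f (z.1, y)) z.2 = _
  rw [h2.deriv]

private lemma pdx_schwartz' (f : SchwartzMap (ℝ × ℝ) ℂ) (z : ℝ × ℝ) :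
    pdx (⇑f) z = fderiv ℝ f z (1, 0) := congrFun (pdx_schwartz f) z

private lemma pdy_schwartz' (f : SchwartzMap (ℝ × ℝ) ℂ) (z : ℝ × ℝ) :
    pdy (⇑f) z = fderiv ℝ f z (0, 1) := congrFun (pdy_schwartz f) z

private lemma scale_formula (p : ℝ) (hp : 2 < p) (u : SchwartzMap (ℝ × ℝ) ℂ)
    {l : ℝ} (hl : 0 < l) :
    Ef p (uscale l (fun z => u z))
      = l * (Xf (fun z => u z) / 2 + Yf (fun z => u z) / 2)
        - l ^ (3 * (p - 2) / 8) * (Pf p (fun z => u z) / p) := by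
  set c : ℝ := l ^ ((3 : ℝ) / 8) with hc
  set s : ℝ := l ^ ((1 : ℝ) / 2) with hs
  set t : ℝ := l ^ ((1 : ℝ) / 4) with ht
  have hcp : 0 < c := Real.rpow_pos_of_pos hl _
  have hsp : 0 < s := Real.rpow_pos_of_pos hl _
  have htp : 0 < t := Real.rpow_pos_of_pos hl _
  set D1 : SchwartzMap (ℝ × ℝ) ℂ := LineDeriv.lineDerivOp ((1, 0) : ℝ × ℝ) u with hD1
  set D2 : SchwartzMap (ℝ × ℝ) ℂ := LineDeriv.lineDerivOp ((0, 1) : ℝ × ℝ) u with hD2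
  set D22 : SchwartzMap (ℝ × ℝ) ℂ := LineDeriv.lineDerivOp ((0, 1) : ℝ × ℝ) D2 with hD22
  have husc : uscale l (fun z => u z)
      = fun z => (c : ℂ) * u (s * z.1, t * z.2) := rfl
  -- X part
  have hX : Xf (uscale l (fun z => u z)) = (c * s) ^ 2 * (s⁻¹ * t⁻¹) * Xf (fun z => u z) := by
    have hpdx : pdx (uscale l (fun z => u z))
        = fun z => ((c * s : ℝ) : ℂ) * D1 (s * z.1, t * z.2) := by
      rw [husc, pdx_scale]
      funext z
      simp only [hD1, SchwartzMap.lineDerivOp_apply_eq_fderiv]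
    have hXu : ∫ z : ℝ × ℝ, ‖pdx (fun z => u z) z‖ ^ 2 = ∫ z : ℝ × ℝ, ‖D1 z‖ ^ 2 := by
      simp only [pdx_schwartz', hD1, SchwartzMap.lineDerivOp_apply_eq_fderiv]
    unfold Xf
    rw [hpdx]
    have hpt : ∀ z : ℝ × ℝ, ‖((c * s : ℝ) : ℂ) * D1 (s * z.1, t * z.2)‖ ^ 2
        = (c * s) ^ 2 * ‖D1 (s * z.1, t * z.2)‖ ^ 2 := by
      intro z
      rw [norm_mul, Complex.norm_real, Real.norm_eq_abs,
        abs_of_pos (mul_pos hcp hsp), mul_pow]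
    simp_rw [hpt]
    rw [integral_const_mul,
      cov_scale hsp htp (fun z => ‖D1 z‖ ^ 2) (D1.continuous.norm.pow 2), hXu]
    ring
  -- Y part
  have hY : Yf (uscale l (fun z => u z))
      = (c * t * t) ^ 2 * (s⁻¹ * t⁻¹) * Yf (fun z => u z) := by
    have hpdy : pdy (uscale l (fun z => u z))
        = fun z => ((c * t : ℝ) : ℂ) * D2 (s * z.1, t * z.2) := by
      rw [husc, pdy_scale]
      funext z
      simp only [hD2, SchwartzMap.lineDerivOp_apply_eq_fderiv]
    have hpdyy : pdy (pdy (uscale l (fun z => u z)))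
        = fun z => ((c * t * t : ℝ) : ℂ) * D22 (s * z.1, t * z.2) := by
      rw [hpdy, pdy_scale]
      funext z
      simp only [hD22, SchwartzMap.lineDerivOp_apply_eq_fderiv]
    have hpdyu : pdy (fun z => u z) = ⇑D2 := by
      funext z
      simp only [pdy_schwartz', hD2, SchwartzMap.lineDerivOp_apply_eq_fderiv]
    have hYu : ∫ z : ℝ × ℝ, ‖pdy (pdy (fun z => u z)) z‖ ^ 2 = ∫ z : ℝ × ℝ, ‖D22 z‖ ^ 2 := by
      rw [hpdyu]
      simp only [pdy_schwartz', hD22, SchwartzMap.lineDerivOp_apply_eq_fderiv]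
    unfold Yf pdyy
    rw [hpdyy]
    have hpt : ∀ z : ℝ × ℝ, ‖((c * t * t : ℝ) : ℂ) * D22 (s * z.1, t * z.2)‖ ^ 2
        = (c * t * t) ^ 2 * ‖D22 (s * z.1, t * z.2)‖ ^ 2 := by
      intro z
      rw [norm_mul, Complex.norm_real, Real.norm_eq_abs,
        abs_of_pos (mul_pos (mul_pos hcp htp) htp), mul_pow]
    simp_rw [hpt]
    rw [integral_const_mul,
      cov_scale hsp htp (fun z => ‖D22 z‖ ^ 2) (D22.continuous.norm.pow 2), hYu]
    ring
  -- P part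
  have hP : Pf p (uscale l (fun z => u z)) = c ^ p * (s⁻¹ * t⁻¹) * Pf p (fun z => u z) := by
    unfold Pf
    rw [husc]
    have hpt : ∀ z : ℝ × ℝ, ‖(c : ℂ) * u (s * z.1, t * z.2)‖ ^ p
        = c ^ p * ‖u (s * z.1, t * z.2)‖ ^ p := by
      intro z
      rw [norm_mul, Complex.norm_real, Real.norm_eq_abs, abs_of_pos hcp,
        Real.mul_rpow hcp.le (norm_nonneg _)]
    simp_rw [hpt]
    have hcont : Continuous fun z : ℝ × ℝ => ‖u z‖ ^ p :=
      u.continuous.norm.rpow_const fun x => Or.inr (by positivity)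
    rw [integral_const_mul, cov_scale hsp htp (fun z => ‖u z‖ ^ p) hcont]
    ring
  -- exponent arithmetic
  have e1 : (c * s) ^ 2 * (s⁻¹ * t⁻¹) = l := by
    rw [hc, hs, ht, pow_two, ← Real.rpow_neg hl.le, ← Real.rpow_neg hl.le]
    simp only [← Real.rpow_add hl]
    norm_num
  have e2 : (c * t * t) ^ 2 * (s⁻¹ * t⁻¹) = l := by
    rw [hc, hs, ht, pow_two, ← Real.rpow_neg hl.le, ← Real.rpow_neg hl.le]
    simp only [← Real.rpow_add hl]
    norm_num
  have e3 : c ^ p * (s⁻¹ * t⁻¹) = l ^ (3 * (p - 2) / 8) := by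
    rw [hc, hs, ht, ← Real.rpow_mul hl.le, ← Real.rpow_neg hl.le, ← Real.rpow_neg hl.le]
    simp only [← Real.rpow_add hl]
    congr 1
    ring
  unfold Ef
  rw [hX, hY, hP]
  rw [mul_div_assoc, mul_div_assoc, e1, e2]
  rw [mul_div_assoc, e3]
  ring

/-- λ ↦ E(u_λ) is differentiable on (0,∞) with derivative Q(u)/2 at λ = 1. -/
theorem stmt_10 (p : ℝ) (hp : 2 < p) (u : SchwartzMap (ℝ × ℝ) ℂ) :
    (∀ l ∈ Set.Ioi (0 : ℝ), DifferentiableAt ℝ (fun t => Ef p (uscale t (fun z => u z))) l)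
      ∧ deriv (fun t => Ef p (uscale t (fun z => u z))) 1 =
          (1 / 2) * (Xf (fun z => u z) + Yf (fun z => u z)
            - (3 * (p - 2) / (4 * p)) * Pf p (fun z => u z)) := by
  set A : ℝ := Xf (fun z => u z) / 2 + Yf (fun z => u z) / 2 with hA
  set B : ℝ := Pf p (fun z => u z) / p with hB
  set α : ℝ := 3 * (p - 2) / 8 with hα
  set g : ℝ → ℝ := fun l => l * A - l ^ α * B with hg
  have hgd : ∀ l : ℝ, l ≠ 0 → HasDerivAt g (A - α * l ^ (α - 1) * B) l := by
    intro l hl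
    have h1 : HasDerivAt (fun x : ℝ => x * A) A l := hasDerivAt_mul_const A
    have h2 : HasDerivAt (fun x : ℝ => x ^ α * B) (α * l ^ (α - 1) * B) l :=
      (Real.hasDerivAt_rpow_const (Or.inl hl)).mul_const B
    exact h1.sub h2
  have hev : ∀ l ∈ Set.Ioi (0 : ℝ),
      (fun t => Ef p (uscale t (fun z => u z))) =ᶠ[nhds l] g := by
    intro l hl
    filter_upwards [Ioi_mem_nhds (Set.mem_Ioi.mp hl)] with x hx
    exact scale_formula p hp u hx
  constructor
  · intro l hl
    exact ((hgd l (Set.mem_Ioi.mp hl).ne').differentiableAt).congr_of_eventuallyEq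
      (hev l hl)
  · have h1 : deriv (fun t => Ef p (uscale t (fun z => u z))) 1 = deriv g 1 :=
      (hev 1 (by norm_num)).deriv_eq
    rw [h1, (hgd 1 one_ne_zero).deriv, Real.one_rpow]
    have hp0 : p ≠ 0 := by linarith
    rw [hA, hB, hα]
    field_simp
    ring
end

section
/- Let 2 < p < 14/3 and let u : ℝ² → ℂ be a Schwartz function with u not identically zero. Then there exists λ₀ > 0 such that E(u_λ) < 0 for every λ ∈ (0, λ₀); since M(u_λ) = M(u), for every c > 0 the infimum of E over Schwartz functions with squared L²-norm equal to c is negative. -/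
open MeasureTheory

open MeasureTheory Real Set Filter Topology

noncomputable section

local notation "𝓢2" => SchwartzMap (ℝ × ℝ) ℂ

namespace Helpers


lemma inv_one_add_sq_le_one (t : ℝ) : (1 + t ^ 2)⁻¹ ≤ 1 := by
  rw [inv_le_one_iff₀]; right; nlinarith

lemma inv_one_add_sq_pos (t : ℝ) : 0 < (1 + t ^ 2)⁻¹ := by positivity

/-- master decay bound -/
lemma decay2 (v : 𝓢2) : ∃ C : ℝ, 0 ≤ C ∧ ∀ z : ℝ × ℝ,
    ‖v z‖ ≤ C * ((1 + z.1 ^ 2)⁻¹ * (1 + z.2 ^ 2)⁻¹) := by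
  obtain ⟨C0, hC0, h0⟩ := v.decay 0 0
  obtain ⟨C2, hC2, h2⟩ := v.decay 2 0
  obtain ⟨C4, hC4, h4⟩ := v.decay 4 0
  refine ⟨C0 + 2 * C2 + C4, by positivity, fun z => ?_⟩
  have h0' := h0 z; have h2' := h2 z; have h4' := h4 z
  rw [norm_iteratedFDeriv_zero] at h0' h2' h4'
  simp only [pow_zero, one_mul] at h0'
  have hz1 : z.1 ^ 2 ≤ ‖z‖ ^ 2 := by
    have h : |z.1| ≤ ‖z‖ := by
      rw [Prod.norm_def]; exact le_max_of_le_left (le_refl _)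
    calc z.1 ^ 2 = |z.1| ^ 2 := (sq_abs _).symm
    _ ≤ ‖z‖ ^ 2 := by gcongr
  have hz2 : z.2 ^ 2 ≤ ‖z‖ ^ 2 := by
    have h : |z.2| ≤ ‖z‖ := by
      rw [Prod.norm_def]; exact le_max_of_le_right (le_refl _)
    calc z.2 ^ 2 = |z.2| ^ 2 := (sq_abs _).symm
    _ ≤ ‖z‖ ^ 2 := by gcongr
  rw [← mul_inv, ← div_eq_mul_inv, le_div_iff₀ (by positivity)]
  have key : ‖v z‖ * ((1 + z.1 ^ 2) * (1 + z.2 ^ 2)) ≤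
      ‖v z‖ * (1 + ‖z‖ ^ 2) ^ 2 := by
    have h1 : (1 + z.1 ^ 2) * (1 + z.2 ^ 2) ≤ (1 + ‖z‖ ^ 2) ^ 2 := by
      have := norm_nonneg z; nlinarith
    exact mul_le_mul_of_nonneg_left h1 (norm_nonneg _)
  refine key.trans ?_
  have expand : ‖v z‖ * (1 + ‖z‖ ^ 2) ^ 2
      = ‖v z‖ + 2 * (‖z‖ ^ 2 * ‖v z‖) + ‖z‖ ^ 4 * ‖v z‖ := by ring
  rw [expand]
  linarith

lemma weight_integrable :
    Integrable (fun z : ℝ × ℝ => (1 + z.1 ^ 2)⁻¹ * (1 + z.2 ^ 2)⁻¹) := by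
  have := (integrable_inv_one_add_sq).mul_prod (integrable_inv_one_add_sq)
  rw [← Measure.volume_eq_prod] at this
  exact this

lemma integrable_mul_norm (v w : 𝓢2) :
    Integrable (fun z : ℝ × ℝ => ‖v z‖ * ‖w z‖) := by
  obtain ⟨Cv, hCv, hv⟩ := decay2 v
  obtain ⟨Cw, hCw, hw⟩ := decay2 w
  refine (weight_integrable.const_mul (Cv * Cw)).mono'
    ((v.continuous.norm.mul w.continuous.norm).aestronglyMeasurable) ?_
  filter_upwards with z
  set W : ℝ := (1 + z.1 ^ 2)⁻¹ * (1 + z.2 ^ 2)⁻¹ with hWdef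
  have hW0 : 0 < W := by positivity
  have hW1 : W ≤ 1 := by
    rw [hWdef]
    calc (1 + z.1 ^ 2)⁻¹ * (1 + z.2 ^ 2)⁻¹ ≤ 1 * 1 := by
          exact mul_le_mul (inv_one_add_sq_le_one _) (inv_one_add_sq_le_one _)
            (inv_one_add_sq_pos _).le zero_le_one
      _ = 1 := by ring
  rw [Real.norm_of_nonneg (by positivity)]
  calc ‖v z‖ * ‖w z‖ ≤ (Cv * W) * (Cw * W) :=
      mul_le_mul (hv z) (hw z) (norm_nonneg _) (by positivity)
  _ = (Cv * Cw) * (W * W) := by ring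
  _ ≤ Cv * Cw * (1 * W) := by
      have : W * W ≤ 1 * W := mul_le_mul_of_nonneg_right hW1 hW0.le
      exact mul_le_mul_of_nonneg_left this (by positivity)
  _ = Cv * Cw * W := by ring

lemma integrable_sq_norm (v : 𝓢2) : Integrable (fun z : ℝ × ℝ => ‖v z‖ ^ 2) := by
  simpa [pow_two] using integrable_mul_norm v v

lemma integrable_rpow_norm (v : 𝓢2) {p : ℝ} (hp : 1 ≤ p) :
    Integrable (fun z : ℝ × ℝ => ‖v z‖ ^ p) := by
  obtain ⟨Cv, hCv, hv⟩ := decay2 v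
  set D := max 1 Cv with hD
  have hD1 : (1:ℝ) ≤ D := le_max_left _ _
  have hD0 : (0:ℝ) ≤ D := le_trans zero_le_one hD1
  refine (weight_integrable.const_mul (D ^ p)).mono'
    ((v.continuous.norm.rpow_const (fun z => Or.inr (by positivity))).aestronglyMeasurable) ?_
  filter_upwards with z
  set W : ℝ := (1 + z.1 ^ 2)⁻¹ * (1 + z.2 ^ 2)⁻¹ with hWdef
  have hW0 : 0 < W := by positivity
  have hW1 : W ≤ 1 := by
    rw [hWdef]
    calc (1 + z.1 ^ 2)⁻¹ * (1 + z.2 ^ 2)⁻¹ ≤ 1 * 1 := by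
          exact mul_le_mul (inv_one_add_sq_le_one _) (inv_one_add_sq_le_one _)
            (inv_one_add_sq_pos _).le zero_le_one
      _ = 1 := by ring
  rw [Real.norm_of_nonneg (Real.rpow_nonneg (norm_nonneg _) _)]
  have hb : ‖v z‖ ≤ D * W := by
    refine (hv z).trans ?_
    exact mul_le_mul_of_nonneg_right (le_max_right _ _) hW0.le
  calc ‖v z‖ ^ p ≤ (D * W) ^ p :=
        Real.rpow_le_rpow (norm_nonneg _) hb (by linarith)
  _ = D ^ p * W ^ p := Real.mul_rpow hD0 hW0.le
  _ ≤ D ^ p * W := by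
      have h2 : W ^ p ≤ W ^ (1:ℝ) :=
        Real.rpow_le_rpow_of_exponent_ge hW0 hW1 hp
      rw [Real.rpow_one] at h2
      exact mul_le_mul_of_nonneg_left h2 (Real.rpow_nonneg hD0 _)



/-! ### decay in single variables -/

lemma decay_y (v : 𝓢2) : ∃ C : ℝ, 0 ≤ C ∧ ∀ z : ℝ × ℝ,
    ‖v z‖ ≤ C * (1 + z.2 ^ 2)⁻¹ ∧ ‖v z‖ ≤ C := by
  obtain ⟨C, hC, h⟩ := decay2 v
  refine ⟨C, hC, fun z => ⟨?_, ?_⟩⟩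
  · refine (h z).trans ?_
    rw [show C * ((1 + z.1 ^ 2)⁻¹ * (1 + z.2 ^ 2)⁻¹)
        = (C * (1 + z.2 ^ 2)⁻¹) * (1 + z.1 ^ 2)⁻¹ by ring]
    calc (C * (1 + z.2 ^ 2)⁻¹) * (1 + z.1 ^ 2)⁻¹ ≤ (C * (1 + z.2 ^ 2)⁻¹) * 1 := by
          exact mul_le_mul_of_nonneg_left (inv_one_add_sq_le_one _) (by positivity)
      _ = C * (1 + z.2 ^ 2)⁻¹ := by ring
  · refine (h z).trans ?_
    calc C * ((1 + z.1 ^ 2)⁻¹ * (1 + z.2 ^ 2)⁻¹) ≤ C * (1 * 1) := by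
          refine mul_le_mul_of_nonneg_left ?_ hC
          exact mul_le_mul (inv_one_add_sq_le_one _) (inv_one_add_sq_le_one _)
            (inv_one_add_sq_pos _).le zero_le_one
      _ = C := by ring

lemma decay_x (v : 𝓢2) : ∃ C : ℝ, 0 ≤ C ∧ ∀ z : ℝ × ℝ,
    ‖v z‖ ≤ C * (1 + z.1 ^ 2)⁻¹ ∧ ‖v z‖ ≤ C := by
  obtain ⟨C, hC, h⟩ := decay2 v
  refine ⟨C, hC, fun z => ⟨?_, ?_⟩⟩
  · refine (h z).trans ?_
    rw [show C * ((1 + z.1 ^ 2)⁻¹ * (1 + z.2 ^ 2)⁻¹)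
        = (C * (1 + z.1 ^ 2)⁻¹) * (1 + z.2 ^ 2)⁻¹ by ring]
    calc (C * (1 + z.1 ^ 2)⁻¹) * (1 + z.2 ^ 2)⁻¹ ≤ (C * (1 + z.1 ^ 2)⁻¹) * 1 := by
          exact mul_le_mul_of_nonneg_left (inv_one_add_sq_le_one _) (by positivity)
      _ = C * (1 + z.1 ^ 2)⁻¹ := by ring
  · refine (h z).trans ?_
    calc C * ((1 + z.1 ^ 2)⁻¹ * (1 + z.2 ^ 2)⁻¹) ≤ C * (1 * 1) := by
          refine mul_le_mul_of_nonneg_left ?_ hC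
          exact mul_le_mul (inv_one_add_sq_le_one _) (inv_one_add_sq_le_one _)
            (inv_one_add_sq_pos _).le zero_le_one
      _ = C := by ring

/-! ### slice integrability and limits -/

lemma integrable_slice_mul_y (v w : 𝓢2) (x : ℝ) :
    Integrable (fun y => ‖v (x, y)‖ * ‖w (x, y)‖) := by
  obtain ⟨Cv, hCv, hv⟩ := decay_y v
  obtain ⟨Cw, hCw, hw⟩ := decay_y w
  refine (integrable_inv_one_add_sq.const_mul (Cv * Cw)).mono'
    (Continuous.aestronglyMeasurable (by fun_prop)) ?_
  filter_upwards with y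
  rw [Real.norm_of_nonneg (by positivity)]
  calc ‖v (x, y)‖ * ‖w (x, y)‖ ≤ (Cv * (1 + y ^ 2)⁻¹) * Cw := by
        exact mul_le_mul (hv (x, y)).1 (hw (x, y)).2 (norm_nonneg _) (by positivity)
    _ = Cv * Cw * (1 + y ^ 2)⁻¹ := by ring

lemma integrable_slice_mul_x (v w : 𝓢2) (y : ℝ) :
    Integrable (fun t => ‖v (t, y)‖ * ‖w (t, y)‖) := by
  obtain ⟨Cv, hCv, hv⟩ := decay_x v
  obtain ⟨Cw, hCw, hw⟩ := decay_x w
  refine (integrable_inv_one_add_sq.const_mul (Cv * Cw)).mono'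
    (Continuous.aestronglyMeasurable (by fun_prop)) ?_
  filter_upwards with t
  rw [Real.norm_of_nonneg (by positivity)]
  calc ‖v (t, y)‖ * ‖w (t, y)‖ ≤ (Cv * (1 + t ^ 2)⁻¹) * Cw := by
        exact mul_le_mul (hv (t, y)).1 (hw (t, y)).2 (norm_nonneg _) (by positivity)
    _ = Cv * Cw * (1 + t ^ 2)⁻¹ := by ring

lemma integrable_slice_sq_y (v : 𝓢2) (x : ℝ) :
    Integrable (fun y => ‖v (x, y)‖ ^ 2) := by
  simpa [pow_two] using integrable_slice_mul_y v v x

lemma integrable_slice_sq_x (v : 𝓢2) (y : ℝ) :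
    Integrable (fun t => ‖v (t, y)‖ ^ 2) := by
  simpa [pow_two] using integrable_slice_mul_x v v y

lemma integrable_slice_rpow_y (v : 𝓢2) {p : ℝ} (hp : 1 ≤ p) (x : ℝ) :
    Integrable (fun y => ‖v (x, y)‖ ^ p) := by
  obtain ⟨Cv, hCv, hv⟩ := decay_y v
  set D := max 1 Cv with hD
  have hD1 : (1:ℝ) ≤ D := le_max_left _ _
  have hD0 : (0:ℝ) ≤ D := le_trans zero_le_one hD1
  refine (integrable_inv_one_add_sq.const_mul (D ^ p)).mono'
    (Continuous.aestronglyMeasurable ?_) ?_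
  · exact ((v.continuous.comp (by fun_prop)).norm.rpow_const
      (fun z => Or.inr (by positivity)))
  filter_upwards with y
  set W : ℝ := (1 + y ^ 2)⁻¹ with hWdef
  have hW0 : 0 < W := by positivity
  have hW1 : W ≤ 1 := inv_one_add_sq_le_one _
  rw [Real.norm_of_nonneg (Real.rpow_nonneg (norm_nonneg _) _)]
  have hb : ‖v (x, y)‖ ≤ D * W :=
    (hv (x, y)).1.trans (mul_le_mul_of_nonneg_right (le_max_right _ _) hW0.le)
  calc ‖v (x, y)‖ ^ p ≤ (D * W) ^ p :=
        Real.rpow_le_rpow (norm_nonneg _) hb (by linarith)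
  _ = D ^ p * W ^ p := Real.mul_rpow hD0 hW0.le
  _ ≤ D ^ p * W := by
      have h2 : W ^ p ≤ W ^ (1:ℝ) :=
        Real.rpow_le_rpow_of_exponent_ge hW0 hW1 hp
      rw [Real.rpow_one] at h2
      exact mul_le_mul_of_nonneg_left h2 (Real.rpow_nonneg hD0 _)

lemma tendsto_base_inv : Tendsto (fun y : ℝ => (1 + y ^ 2)⁻¹) atTop (𝓝 0) := by
  apply tendsto_inv_atTop_zero.comp
  exact tendsto_atTop_add_const_left _ 1 (tendsto_pow_atTop two_ne_zero)

lemma tendsto_slice_sq_y (v : 𝓢2) (x : ℝ) :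
    Tendsto (fun y => ‖v (x, y)‖ ^ 2) atTop (𝓝 0) := by
  obtain ⟨C, hC, hv⟩ := decay_y v
  have hb : Tendsto (fun y : ℝ => (C * (1 + y ^ 2)⁻¹) ^ 2) atTop (𝓝 0) := by
    have h1 : Tendsto (fun y : ℝ => C * (1 + y ^ 2)⁻¹) atTop (𝓝 (C * 0)) :=
      tendsto_base_inv.const_mul C
    rw [mul_zero] at h1
    simpa using h1.pow 2
  refine squeeze_zero (fun y => by positivity) (fun y => ?_) hb
  have := (hv (x, y)).1
  calc ‖v (x, y)‖ ^ 2 ≤ (C * (1 + y ^ 2)⁻¹) ^ 2 := by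
        exact pow_le_pow_left₀ (norm_nonneg _) this 2
    _ = (C * (1 + y ^ 2)⁻¹) ^ 2 := rfl

lemma tendsto_slice_sq_x (v : 𝓢2) (y : ℝ) :
    Tendsto (fun t => ‖v (t, y)‖ ^ 2) atTop (𝓝 0) := by
  obtain ⟨C, hC, hv⟩ := decay_x v
  have hb : Tendsto (fun t : ℝ => (C * (1 + t ^ 2)⁻¹) ^ 2) atTop (𝓝 0) := by
    have h1 : Tendsto (fun t : ℝ => C * (1 + t ^ 2)⁻¹) atTop (𝓝 (C * 0)) :=
      tendsto_base_inv.const_mul C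
    rw [mul_zero] at h1
    simpa using h1.pow 2
  refine squeeze_zero (fun t => by positivity) (fun t => ?_) hb
  exact pow_le_pow_left₀ (norm_nonneg _) (hv (t, y)).1 2

/-! ### derivatives of slices -/

lemma hasDerivAt_slice_y (v : 𝓢2) (x y : ℝ) :
    HasDerivAt (fun t => v (x, t)) (LineDeriv.lineDerivOpCLM ℝ 𝓢2 ((0, 1) : ℝ × ℝ) v (x, y)) y := by
  have h1 : HasDerivAt (fun t : ℝ => ((x, t) : ℝ × ℝ)) (((0 : ℝ), (1 : ℝ)) : ℝ × ℝ) y :=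
    (hasDerivAt_const y x).prodMk (hasDerivAt_id y)
  have h2 := (v.differentiable.differentiableAt.hasFDerivAt (x := ((x, y) : ℝ × ℝ))).comp_hasDerivAt y h1
  rw [LineDeriv.lineDerivOpCLM_apply, SchwartzMap.lineDerivOp_apply_eq_fderiv]
  exact h2

lemma hasDerivAt_slice_x (v : 𝓢2) (x y : ℝ) :
    HasDerivAt (fun t => v (t, y)) (LineDeriv.lineDerivOpCLM ℝ 𝓢2 ((1, 0) : ℝ × ℝ) v (x, y)) x := by
  have h1 : HasDerivAt (fun t : ℝ => ((t, y) : ℝ × ℝ)) (((1 : ℝ), (0 : ℝ)) : ℝ × ℝ) x :=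
    (hasDerivAt_id x).prodMk (hasDerivAt_const x y)
  have h2 := (v.differentiable.differentiableAt.hasFDerivAt (x := ((x, y) : ℝ × ℝ))).comp_hasDerivAt x h1
  rw [LineDeriv.lineDerivOpCLM_apply, SchwartzMap.lineDerivOp_apply_eq_fderiv]
  exact h2

/-! ### complex helper -/

lemma re_im_bound (z w : ℂ) : |z.re * w.re + z.im * w.im| ≤ ‖z‖ * ‖w‖ := by
  have h : z.re * w.re + z.im * w.im = ((starRingEnd ℂ) z * w).re := by
    simp [Complex.mul_re]
  rw [h]
  refine (Complex.abs_re_le_norm _).trans ?_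
  rw [norm_mul]
  simp

lemma norm_sq_complex (z : ℂ) : ‖z‖ ^ 2 = z.re ^ 2 + z.im ^ 2 := by
  rw [Complex.sq_norm, Complex.normSq_apply]; ring

/-! ### 1D core lemmas -/

/-- Cauchy–Schwarz for integrals of nonnegative functions. -/
lemma cs_integral {α : Type*} [MeasurableSpace α] (μ : Measure α) (f g : α → ℝ)
    (hf0 : ∀ x, 0 ≤ f x) (hg0 : ∀ x, 0 ≤ g x)
    (hfm : AEStronglyMeasurable f μ) (hgm : AEStronglyMeasurable g μ)
    (hf2 : Integrable (fun x => f x ^ 2) μ) (hg2 : Integrable (fun x => g x ^ 2) μ) :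
    ∫ x, f x * g x ∂μ ≤ Real.sqrt (∫ x, f x ^ 2 ∂μ) * Real.sqrt (∫ x, g x ^ 2 ∂μ) := by
  have hpq : Real.HolderConjugate 2 2 := Real.HolderConjugate.two_two
  have hof : (ENNReal.ofReal 2) = 2 := by
    rw [show (2:ℝ) = ((2:ℕ):ℝ) by norm_num, ENNReal.ofReal_natCast]; norm_num
  have hf : MemLp f (ENNReal.ofReal 2) μ := by
    rw [hof]; exact (memLp_two_iff_integrable_sq hfm).2 hf2
  have hg : MemLp g (ENNReal.ofReal 2) μ := by
    rw [hof]; exact (memLp_two_iff_integrable_sq hgm).2 hg2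
  have h := integral_mul_le_Lp_mul_Lq_of_nonneg hpq
    (Eventually.of_forall hf0) (Eventually.of_forall hg0) hf hg
  have hrw : ∀ (h : α → ℝ), (∫ x, h x ^ (2:ℝ) ∂μ) = ∫ x, h x ^ 2 ∂μ := by
    intro h; congr 1; funext x
    rw [show (2:ℝ) = ((2:ℕ):ℝ) by norm_num, Real.rpow_natCast]
  rw [hrw f, hrw g] at h
  rw [Real.sqrt_eq_rpow, Real.sqrt_eq_rpow]
  convert h using 3 <;> norm_num

/-- 1D Agmon-type bound: `‖f t₀‖² ≤ 2∫‖f‖‖f'‖`. -/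
lemma agmon_aux {f f' : ℝ → ℂ}
    (hderiv : ∀ t, HasDerivAt f (f' t) t) (hc' : Continuous f')
    (hint : Integrable (fun t => ‖f t‖ * ‖f' t‖))
    (hlim : Tendsto (fun t => ‖f t‖ ^ 2) atTop (𝓝 0)) (t₀ : ℝ) :
    ‖f t₀‖ ^ 2 ≤ 2 * ∫ t, ‖f t‖ * ‖f' t‖ := by
  have hdf : Differentiable ℝ f := fun t => (hderiv t).differentiableAt
  have hcf : Continuous f := hdf.continuous
  set φ : ℝ → ℝ := fun t =>
    2 * ((f t).re * (f' t).re + (f t).im * (f' t).im) with hφdef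
  have hF : ∀ t, HasDerivAt (fun s => ‖f s‖ ^ 2) (φ t) t := by
    intro t
    have hre : HasDerivAt (fun s => (f s).re) ((f' t).re) t :=
      (Complex.reCLM.hasFDerivAt.comp_hasDerivAt t (hderiv t))
    have him : HasDerivAt (fun s => (f s).im) ((f' t).im) t :=
      (Complex.imCLM.hasFDerivAt.comp_hasDerivAt t (hderiv t))
    have h1 : HasDerivAt (fun s => (f s).re ^ 2 + (f s).im ^ 2) _ t := (hre.pow 2).add (him.pow 2)
    have heq : (fun s => (f s).re ^ 2 + (f s).im ^ 2) = fun s => ‖f s‖ ^ 2 := by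
      funext s; rw [norm_sq_complex]
    rw [heq] at h1
    convert h1 using 1
    simp [hφdef]; ring
  have hφbound : ∀ t, |φ t| ≤ 2 * (‖f t‖ * ‖f' t‖) := by
    intro t
    rw [hφdef, abs_mul, abs_two]
    exact mul_le_mul_of_nonneg_left (re_im_bound _ _) (by norm_num)
  have hφcont : Continuous φ := by
    rw [hφdef]
    exact continuous_const.mul
      (((Complex.continuous_re.comp hcf).mul (Complex.continuous_re.comp hc')).add
        ((Complex.continuous_im.comp hcf).mul (Complex.continuous_im.comp hc')))
  have hφint : Integrable φ := by
    refine (hint.const_mul 2).mono' hφcont.aestronglyMeasurable ?_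
    filter_upwards with t
    rw [Real.norm_eq_abs]
    exact hφbound t
  have hFTC : ∫ t in Ioi t₀, φ t = 0 - ‖f t₀‖ ^ 2 :=
    integral_Ioi_of_hasDerivAt_of_tendsto' (fun t _ => hF t) hφint.integrableOn hlim
  have h1 : ‖f t₀‖ ^ 2 = - ∫ t in Ioi t₀, φ t := by linarith
  have h2 : - ∫ t in Ioi t₀, φ t ≤ ∫ t in Ioi t₀, |φ t| := by
    have hn := norm_integral_le_integral_norm (μ := volume.restrict (Ioi t₀)) φ
    simp only [Real.norm_eq_abs] at hn
    exact (neg_le_abs _).trans hn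
  have h3 : ∫ t in Ioi t₀, |φ t| ≤ ∫ t in Ioi t₀, 2 * (‖f t‖ * ‖f' t‖) := by
    refine integral_mono hφint.abs.integrableOn ((hint.const_mul 2).integrableOn) ?_
    exact hφbound
  have h4 : ∫ t in Ioi t₀, 2 * (‖f t‖ * ‖f' t‖) ≤ ∫ t, 2 * (‖f t‖ * ‖f' t‖) := by
    refine setIntegral_le_integral (hint.const_mul 2) ?_
    filter_upwards with t
    positivity
  rw [h1]
  simp only [integral_const_mul] at h3 h4
  linarith

/-- 1D integration by parts: `∫‖f'‖² ≤ ∫‖f‖‖f''‖`. -/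
lemma ibp_aux {f f' f'' : ℝ → ℂ}
    (hd1 : ∀ t, HasDerivAt f (f' t) t) (hd2 : ∀ t, HasDerivAt f' (f'' t) t)
    (hc1 : Continuous f') (hc2 : Continuous f'')
    (hint1 : Integrable (fun t => ‖f t‖ * ‖f' t‖))
    (hint2 : Integrable (fun t => ‖f' t‖ ^ 2))
    (hint3 : Integrable (fun t => ‖f t‖ * ‖f'' t‖)) :
    ∫ t, ‖f' t‖ ^ 2 ≤ ∫ t, ‖f t‖ * ‖f'' t‖ := by
  have hdf : Differentiable ℝ f := fun t => (hd1 t).differentiableAt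
  have hcf : Continuous f := hdf.continuous
  set H : ℝ → ℝ := fun t => (f t).re * (f'' t).re + (f t).im * (f'' t).im with hHdef
  set G : ℝ → ℝ := fun t => (f t).re * (f' t).re + (f t).im * (f' t).im with hGdef
  have hcf0 : Continuous f := (fun t => (hd1 t).differentiableAt : ∀ t, DifferentiableAt ℝ f t) |> fun h => (Differentiable.continuous h)
  have hHcont : Continuous H := by
    rw [hHdef]
    exact ((Complex.continuous_re.comp hcf0).mul (Complex.continuous_re.comp hc2)).add
      ((Complex.continuous_im.comp hcf0).mul (Complex.continuous_im.comp hc2))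
  have hHint : Integrable H := by
    refine hint3.mono' hHcont.aestronglyMeasurable ?_
    filter_upwards with t
    rw [Real.norm_eq_abs]
    exact re_im_bound _ _
  have hGderiv : ∀ t, HasDerivAt G (‖f' t‖ ^ 2 + H t) t := by
    intro t
    have hre : HasDerivAt (fun s => (f s).re) ((f' t).re) t :=
      (Complex.reCLM.hasFDerivAt.comp_hasDerivAt t (hd1 t))
    have him : HasDerivAt (fun s => (f s).im) ((f' t).im) t :=
      (Complex.imCLM.hasFDerivAt.comp_hasDerivAt t (hd1 t))
    have hre' : HasDerivAt (fun s => (f' s).re) ((f'' t).re) t :=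
      (Complex.reCLM.hasFDerivAt.comp_hasDerivAt t (hd2 t))
    have him' : HasDerivAt (fun s => (f' s).im) ((f'' t).im) t :=
      (Complex.imCLM.hasFDerivAt.comp_hasDerivAt t (hd2 t))
    have h1 : HasDerivAt G _ t := (hre.mul hre').add (him.mul him')
    convert h1 using 1
    rw [norm_sq_complex]
    simp [hHdef]; ring
  have hGcont : Continuous G := by
    rw [hGdef]
    exact ((Complex.continuous_re.comp hcf).mul (Complex.continuous_re.comp hc1)).add
      ((Complex.continuous_im.comp hcf).mul (Complex.continuous_im.comp hc1))
  have hGint : Integrable G := by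
    refine hint1.mono' hGcont.aestronglyMeasurable ?_
    filter_upwards with t
    rw [Real.norm_eq_abs]
    exact re_im_bound _ _
  have hψint : Integrable (fun t => ‖f' t‖ ^ 2 + H t) := hint2.add hHint
  have hzero : ∫ t, (‖f' t‖ ^ 2 + H t) = 0 :=
    integral_eq_zero_of_hasDerivAt_of_integrable hGderiv hψint hGint
  rw [integral_add hint2 hHint] at hzero
  have h2 : - ∫ t, H t ≤ ∫ t, |H t| := by
    have hn := norm_integral_le_integral_norm (μ := (volume : Measure ℝ)) H
    simp only [Real.norm_eq_abs] at hn
    exact (neg_le_abs _).trans hn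
  have h3 : ∫ t, |H t| ≤ ∫ t, ‖f t‖ * ‖f'' t‖ := by
    refine integral_mono hHint.abs hint3 ?_
    intro t
    exact re_im_bound _ _
  linarith


/-! ### Schwartz derivative abbreviations -/

abbrev Dx (v : 𝓢2) : 𝓢2 := LineDeriv.lineDerivOpCLM ℝ 𝓢2 ((1, 0) : ℝ × ℝ) v
abbrev Dy (v : 𝓢2) : 𝓢2 := LineDeriv.lineDerivOpCLM ℝ 𝓢2 ((0, 1) : ℝ × ℝ) v

lemma pdx_coe (v : 𝓢2) : pdx ⇑v = ⇑(Dx v) := by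
  funext z
  exact (hasDerivAt_slice_x v z.1 z.2).deriv

lemma pdy_coe (v : 𝓢2) : pdy ⇑v = ⇑(Dy v) := by
  funext z
  exact (hasDerivAt_slice_y v z.1 z.2).deriv

lemma pdyy_coe (v : 𝓢2) : pdyy ⇑v = ⇑(Dy (Dy v)) := by
  rw [pdyy, pdy_coe, pdy_coe]

/-! ### Fubini plumbing -/

lemma integral_prod_eq (f : ℝ × ℝ → ℝ) (hf : Integrable f) :
    ∫ z, f z = ∫ x, ∫ y, f (x, y) := by
  rw [Measure.volume_eq_prod]
  exact integral_prod f ((Measure.volume_eq_prod ℝ ℝ) ▸ hf)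

lemma integral_swap_eq (f : ℝ × ℝ → ℝ) (hf : Integrable f) :
    ∫ z, f z = ∫ y, ∫ x, f (x, y) := by
  rw [integral_prod_eq f hf]
  exact integral_integral_swap ((Measure.volume_eq_prod ℝ ℝ) ▸ hf)

lemma marg_left (f : ℝ × ℝ → ℝ) (hf : Integrable f) :
    Integrable (fun x => ∫ y, f (x, y)) :=
  Integrable.integral_prod_left ((Measure.volume_eq_prod ℝ ℝ) ▸ hf)

lemma marg_right (f : ℝ × ℝ → ℝ) (hf : Integrable f) :
    Integrable (fun y => ∫ x, f (x, y)) :=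
  Integrable.integral_prod_right ((Measure.volume_eq_prod ℝ ℝ) ▸ hf)

/-! ### nonnegativity -/

lemma Mf_nonneg (f : ℝ × ℝ → ℂ) : 0 ≤ Mf f :=
  integral_nonneg fun z => by positivity

lemma Xf_nonneg (f : ℝ × ℝ → ℂ) : 0 ≤ Xf f :=
  integral_nonneg fun z => by positivity

lemma Yf_nonneg (f : ℝ × ℝ → ℂ) : 0 ≤ Yf f :=
  integral_nonneg fun z => by positivity

lemma Pf_nonneg (p : ℝ) (f : ℝ × ℝ → ℂ) : 0 ≤ Pf p f :=
  integral_nonneg fun z => Real.rpow_nonneg (norm_nonneg _) _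

/-! ### the sup bound for the marginal -/

lemma Ax_le (u : 𝓢2) (x : ℝ) :
    (∫ y, ‖u (x, y)‖ ^ 2) ≤ 2 * Real.sqrt (Mf ⇑u) * Real.sqrt (Xf ⇑u) := by
  have hpt : ∀ y, ‖u (x, y)‖ ^ 2 ≤ 2 * ∫ t, ‖u (t, y)‖ * ‖Dx u (t, y)‖ := by
    intro y
    exact agmon_aux (f := fun t => u (t, y)) (f' := fun t => Dx u (t, y))
      (fun t => hasDerivAt_slice_x u t y)
      ((Dx u).continuous.comp (by fun_prop))
      (integrable_slice_mul_x u (Dx u) y)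
      (tendsto_slice_sq_x u y) x
  set G : ℝ × ℝ → ℝ := fun z => ‖u z‖ * ‖Dx u z‖ with hGdef
  have hGint : Integrable G := integrable_mul_norm u (Dx u)
  have hH : Integrable (fun y => ∫ t, G (t, y)) := marg_right G hGint
  have h1 : (∫ y, ‖u (x, y)‖ ^ 2) ≤ ∫ y, 2 * ∫ t, G (t, y) := by
    refine integral_mono (integrable_slice_sq_y u x) (hH.const_mul 2) ?_
    exact hpt
  have h2 : (∫ y, 2 * ∫ t, G (t, y)) = 2 * ∫ z, G z := by
    rw [integral_const_mul, ← integral_swap_eq G hGint]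
  have h3 : ∫ z, G z ≤ Real.sqrt (Mf ⇑u) * Real.sqrt (Xf ⇑u) := by
    have hcs := cs_integral volume (fun z => ‖u z‖) (fun z => ‖Dx u z‖)
      (fun z => norm_nonneg _) (fun z => norm_nonneg _)
      u.continuous.norm.aestronglyMeasurable (Dx u).continuous.norm.aestronglyMeasurable
      (integrable_sq_norm u) (integrable_sq_norm (Dx u))
    have hM : (∫ z : ℝ × ℝ, ‖u z‖ ^ 2) = Mf ⇑u := rfl
    have hX : (∫ z : ℝ × ℝ, ‖Dx u z‖ ^ 2) = Xf ⇑u := by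
      rw [Xf, pdx_coe]
    rw [hM, hX] at hcs
    exact hcs
  calc (∫ y, ‖u (x, y)‖ ^ 2) ≤ 2 * ∫ z, G z := by rw [← h2]; exact h1
    _ ≤ 2 * (Real.sqrt (Mf ⇑u) * Real.sqrt (Xf ⇑u)) := by linarith
    _ = 2 * Real.sqrt (Mf ⇑u) * Real.sqrt (Xf ⇑u) := by ring

/-! ### slice interpolation bound -/

lemma sqrt_combine {a b : ℝ} (ha : 0 ≤ a) (hb : 0 ≤ b) :
    Real.sqrt a * Real.sqrt (Real.sqrt a * Real.sqrt b)
      = a ^ ((3:ℝ)/4) * b ^ ((1:ℝ)/4) := by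
  rw [Real.sqrt_mul (Real.sqrt_nonneg a)]
  rw [Real.sqrt_eq_rpow, Real.sqrt_eq_rpow, Real.sqrt_eq_rpow, Real.sqrt_eq_rpow]
  rw [← Real.rpow_mul ha, ← Real.rpow_mul hb]
  rw [show (1:ℝ)/2 * (1/2) = 1/4 by norm_num]
  rw [← mul_assoc, ← Real.rpow_add' ha (by norm_num : (1:ℝ)/2 + 1/4 ≠ 0)]
  norm_num

lemma slice_sup (u : 𝓢2) (x y : ℝ) :
    ‖u (x, y)‖ ^ 2 ≤ 2 * ((∫ t, ‖u (x, t)‖ ^ 2) ^ ((3:ℝ)/4)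
      * (∫ t, ‖Dy (Dy u) (x, t)‖ ^ 2) ^ ((1:ℝ)/4)) := by
  set a := ∫ t, ‖u (x, t)‖ ^ 2 with hadef
  set w := ∫ t, ‖Dy u (x, t)‖ ^ 2 with hwdef
  set b := ∫ t, ‖Dy (Dy u) (x, t)‖ ^ 2 with hbdef
  have ha0 : 0 ≤ a := integral_nonneg fun t => by positivity
  have hw0 : 0 ≤ w := integral_nonneg fun t => by positivity
  have hb0 : 0 ≤ b := integral_nonneg fun t => by positivity
  have h1 : ‖u (x, y)‖ ^ 2 ≤ 2 * ∫ t, ‖u (x, t)‖ * ‖Dy u (x, t)‖ :=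
    agmon_aux (f := fun t => u (x, t)) (f' := fun t => Dy u (x, t))
      (fun t => hasDerivAt_slice_y u x t)
      ((Dy u).continuous.comp (by fun_prop))
      (integrable_slice_mul_y u (Dy u) x)
      (tendsto_slice_sq_y u x) y
  have h2 : (∫ t, ‖u (x, t)‖ * ‖Dy u (x, t)‖) ≤ Real.sqrt a * Real.sqrt w :=
    cs_integral volume _ _ (fun t => norm_nonneg _) (fun t => norm_nonneg _)
      (Continuous.aestronglyMeasurable (by fun_prop))
      (Continuous.aestronglyMeasurable (by fun_prop))
      (integrable_slice_sq_y u x) (integrable_slice_sq_y (Dy u) x)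
  have h3 : w ≤ ∫ t, ‖u (x, t)‖ * ‖Dy (Dy u) (x, t)‖ :=
    ibp_aux (f := fun t => u (x, t)) (f' := fun t => Dy u (x, t))
      (f'' := fun t => Dy (Dy u) (x, t))
      (fun t => hasDerivAt_slice_y u x t)
      (fun t => hasDerivAt_slice_y (Dy u) x t)
      ((Dy u).continuous.comp (by fun_prop))
      ((Dy (Dy u)).continuous.comp (by fun_prop))
      (integrable_slice_mul_y u (Dy u) x)
      (integrable_slice_sq_y (Dy u) x)
      (integrable_slice_mul_y u (Dy (Dy u)) x)
  have h4 : (∫ t, ‖u (x, t)‖ * ‖Dy (Dy u) (x, t)‖) ≤ Real.sqrt a * Real.sqrt b :=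
    cs_integral volume _ _ (fun t => norm_nonneg _) (fun t => norm_nonneg _)
      (Continuous.aestronglyMeasurable (by fun_prop))
      (Continuous.aestronglyMeasurable (by fun_prop))
      (integrable_slice_sq_y u x) (integrable_slice_sq_y (Dy (Dy u)) x)
  have h5 : Real.sqrt w ≤ Real.sqrt (Real.sqrt a * Real.sqrt b) :=
    Real.sqrt_le_sqrt (h3.trans h4)
  calc ‖u (x, y)‖ ^ 2 ≤ 2 * ∫ t, ‖u (x, t)‖ * ‖Dy u (x, t)‖ := h1
    _ ≤ 2 * (Real.sqrt a * Real.sqrt w) := by linarith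
    _ ≤ 2 * (Real.sqrt a * Real.sqrt (Real.sqrt a * Real.sqrt b)) := by
        have := mul_le_mul_of_nonneg_left h5 (Real.sqrt_nonneg a)
        linarith
    _ = 2 * (a ^ ((3:ℝ)/4) * b ^ ((1:ℝ)/4)) := by rw [sqrt_combine ha0 hb0]

/-! ### crude Gagliardo–Nirenberg type bound -/

lemma crude_bound (u : 𝓢2) {p : ℝ} (hp1 : 2 < p) (hp2 : p < 14/3) :
    Pf p ⇑u ≤ 4 ^ ((p-2)/2) * (Mf ⇑u) ^ ((p-2)/4) * (Xf ⇑u) ^ ((p-2)/4)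
      * (Mf ⇑u + Yf ⇑u) := by
  set s : ℝ := (p - 2) / 2 with hsdef
  have hs0 : 0 < s := by rw [hsdef]; linarith
  have hs4 : s / 4 < 1 := by rw [hsdef]; linarith
  have hp1' : (1:ℝ) ≤ p := by linarith
  set S : ℝ := 2 * Real.sqrt (Mf ⇑u) * Real.sqrt (Xf ⇑u) with hSdef
  have hS0 : 0 ≤ S := by rw [hSdef]; positivity
  set A : ℝ → ℝ := fun x => ∫ t, ‖u (x, t)‖ ^ 2 with hAdef
  set B : ℝ → ℝ := fun x => ∫ t, ‖Dy (Dy u) (x, t)‖ ^ 2 with hBdef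
  have hA0 : ∀ x, 0 ≤ A x := fun x => integral_nonneg fun t => by positivity
  have hB0 : ∀ x, 0 ≤ B x := fun x => integral_nonneg fun t => by positivity
  have hAS : ∀ x, A x ≤ S := fun x => Ax_le u x
  -- pointwise-in-x bound
  have key : ∀ x, (∫ y, ‖u (x, y)‖ ^ p) ≤ 2 ^ s * S ^ s * (A x + B x) := by
    intro x
    have step1 : (∫ y, ‖u (x, y)‖ ^ p)
        ≤ (2 * (A x ^ ((3:ℝ)/4) * B x ^ ((1:ℝ)/4))) ^ s * A x := by
      have hpt : ∀ y, ‖u (x, y)‖ ^ p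
          ≤ (2 * (A x ^ ((3:ℝ)/4) * B x ^ ((1:ℝ)/4))) ^ s * ‖u (x, y)‖ ^ 2 := by
        intro y
        have ht0 : (0:ℝ) ≤ ‖u (x, y)‖ := norm_nonneg _
        have hsplit : ‖u (x, y)‖ ^ p = (‖u (x, y)‖ ^ 2) ^ s * ‖u (x, y)‖ ^ 2 := by
          rw [← Real.rpow_natCast ‖u (x, y)‖ 2, ← Real.rpow_mul ht0]
          rw [← Real.rpow_add' ht0 (by push_cast; rw [hsdef]; intro hc; nlinarith)]
          congr 1
          push_cast
          rw [hsdef]; ring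
        rw [hsplit]
        have hmono : (‖u (x, y)‖ ^ 2) ^ s
            ≤ (2 * (A x ^ ((3:ℝ)/4) * B x ^ ((1:ℝ)/4))) ^ s :=
          Real.rpow_le_rpow (by positivity) (slice_sup u x y) hs0.le
        exact mul_le_mul_of_nonneg_right hmono (by positivity)
      have hmint : Integrable (fun y => ‖u (x, y)‖ ^ p) :=
        integrable_slice_rpow_y u hp1' x
      have hrint : Integrable (fun y =>
          (2 * (A x ^ ((3:ℝ)/4) * B x ^ ((1:ℝ)/4))) ^ s * ‖u (x, y)‖ ^ 2) :=
        (integrable_slice_sq_y u x).const_mul _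
      have := integral_mono hmint hrint hpt
      rwa [integral_const_mul] at this
    have step2 : (2 * (A x ^ ((3:ℝ)/4) * B x ^ ((1:ℝ)/4))) ^ s * A x
        ≤ 2 ^ s * S ^ s * (A x + B x) := by
      have hAx := hA0 x; have hBx := hB0 x; have hASx := hAS x
      have e1 : (2 * (A x ^ ((3:ℝ)/4) * B x ^ ((1:ℝ)/4))) ^ s
          = 2 ^ s * (A x ^ ((3:ℝ)/4 * s) * B x ^ ((1:ℝ)/4 * s)) := by
        rw [Real.mul_rpow (by norm_num) (by positivity),
          Real.mul_rpow (by positivity) (by positivity),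
          ← Real.rpow_mul hAx, ← Real.rpow_mul hBx]
      rw [e1]
      rcases eq_or_lt_of_le hAx with hA | hApos
      · rw [← hA, mul_zero]
        positivity
      · -- A x > 0
        have e3 : A x ^ ((1:ℝ)/4 * s) * A x ^ (1 - (1:ℝ)/4 * s) = A x := by
          rw [← Real.rpow_add hApos, show (1:ℝ)/4 * s + (1 - (1:ℝ)/4 * s) = 1 by ring,
            Real.rpow_one]
        have q1 : A x ^ ((3:ℝ)/4 * s) * B x ^ ((1:ℝ)/4 * s) * A x
            = (A x ^ ((3:ℝ)/4 * s) * A x ^ ((1:ℝ)/4 * s))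
              * (A x ^ (1 - (1:ℝ)/4 * s) * B x ^ ((1:ℝ)/4 * s)) := by
          linear_combination (-(A x ^ ((3:ℝ)/4 * s) * B x ^ ((1:ℝ)/4 * s))) * e3
        have hw2 : (0:ℝ) ≤ (1:ℝ)/4 * s := by positivity
        have hw1 : (0:ℝ) ≤ 1 - (1:ℝ)/4 * s := by
          rw [hsdef]; nlinarith
        have q2 : A x ^ ((3:ℝ)/4 * s) * A x ^ ((1:ℝ)/4 * s)
            ≤ S ^ ((3:ℝ)/4 * s) * S ^ ((1:ℝ)/4 * s) := by
          have t1 : A x ^ ((3:ℝ)/4 * s) ≤ S ^ ((3:ℝ)/4 * s) :=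
            Real.rpow_le_rpow hAx hASx (by positivity)
          have t2 : A x ^ ((1:ℝ)/4 * s) ≤ S ^ ((1:ℝ)/4 * s) :=
            Real.rpow_le_rpow hAx hASx hw2
          exact mul_le_mul t1 t2 (Real.rpow_nonneg hAx _) (Real.rpow_nonneg hS0 _)
        have q3 : A x ^ (1 - (1:ℝ)/4 * s) * B x ^ ((1:ℝ)/4 * s) ≤ A x + B x := by
          have := Real.geom_mean_le_arith_mean2_weighted hw1 hw2 hAx hBx (by ring)
          have h1a : (1 - (1:ℝ)/4 * s) ≤ 1 := by linarith
          have h1 : (1 - (1:ℝ)/4 * s) * A x ≤ A x :=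
            (mul_le_mul_of_nonneg_right h1a hAx).trans_eq (one_mul _)
          have h2 : ((1:ℝ)/4 * s) * B x ≤ B x := by
            have hs43 : (1:ℝ)/4 * s ≤ 1 := by linarith
            exact (mul_le_mul_of_nonneg_right hs43 hBx).trans_eq (one_mul _)
          linarith
        have q4 : S ^ ((3:ℝ)/4 * s) * S ^ ((1:ℝ)/4 * s) = S ^ s := by
          rw [← Real.rpow_add' hS0 (by intro hc; nlinarith), show (3:ℝ)/4 * s + 1/4 * s = s by ring]
        calc 2 ^ s * (A x ^ ((3:ℝ)/4 * s) * B x ^ ((1:ℝ)/4 * s)) * A x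
            = 2 ^ s * ((A x ^ ((3:ℝ)/4 * s) * A x ^ ((1:ℝ)/4 * s))
              * (A x ^ (1 - (1:ℝ)/4 * s) * B x ^ ((1:ℝ)/4 * s))) := by
              rw [mul_assoc, q1]
          _ ≤ 2 ^ s * ((S ^ ((3:ℝ)/4 * s) * S ^ ((1:ℝ)/4 * s)) * (A x + B x)) := by
              refine mul_le_mul_of_nonneg_left ?_ (by positivity)
              refine mul_le_mul q2 q3 (by positivity) (by positivity)
          _ = 2 ^ s * S ^ s * (A x + B x) := by rw [q4]; ring
    exact step1.trans step2
  -- integrate in x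
  have hPint : Integrable (fun z : ℝ × ℝ => ‖u z‖ ^ p) := integrable_rpow_norm u hp1'
  have hAint : Integrable A := marg_left _ (integrable_sq_norm u)
  have hBint : Integrable B := marg_left _ (integrable_sq_norm (Dy (Dy u)))
  have hfub : Pf p ⇑u = ∫ x, ∫ y, ‖u (x, y)‖ ^ p :=
    integral_prod_eq _ hPint
  have hmono2 : (∫ x, ∫ y, ‖u (x, y)‖ ^ p) ≤ ∫ x, 2 ^ s * S ^ s * (A x + B x) := by
    refine integral_mono (marg_left _ hPint) ?_ key
    exact ((hAint.add hBint).const_mul _)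
  have hfinal : (∫ x, 2 ^ s * S ^ s * (A x + B x))
      = 2 ^ s * S ^ s * (Mf ⇑u + Yf ⇑u) := by
    rw [integral_const_mul, integral_add hAint hBint]
    congr 2
    · exact (integral_prod_eq _ (integrable_sq_norm u)).symm
    · rw [Yf, pdyy_coe]
      exact (integral_prod_eq _ (integrable_sq_norm (Dy (Dy u)))).symm
  have hSs : 2 ^ s * S ^ s = 4 ^ s * (Mf ⇑u) ^ (s/2) * (Xf ⇑u) ^ (s/2) := by
    have hM0 := Mf_nonneg ⇑u
    have hX0 := Xf_nonneg ⇑u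
    rw [hSdef, Real.mul_rpow (by positivity) (Real.sqrt_nonneg _),
      Real.mul_rpow (by norm_num) (Real.sqrt_nonneg _),
      Real.sqrt_eq_rpow, Real.sqrt_eq_rpow,
      ← Real.rpow_mul hM0, ← Real.rpow_mul hX0]
    rw [show (1:ℝ)/2 * s = s/2 by ring]
    rw [show (4:ℝ) = 2 * 2 by norm_num, Real.mul_rpow (by norm_num) (by norm_num)]
    ring
  have hMY : 0 ≤ Mf ⇑u + Yf ⇑u := by
    have := Mf_nonneg ⇑u; have := Yf_nonneg ⇑u; linarith
  calc Pf p ⇑u ≤ 2 ^ s * S ^ s * (Mf ⇑u + Yf ⇑u) := by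
        rw [hfub, ← hfinal]; exact hmono2
    _ = 4 ^ s * (Mf ⇑u) ^ (s/2) * (Xf ⇑u) ^ (s/2) * (Mf ⇑u + Yf ⇑u) := by rw [hSs]
    _ = 4 ^ ((p-2)/2) * (Mf ⇑u) ^ ((p-2)/4) * (Xf ⇑u) ^ ((p-2)/4) * (Mf ⇑u + Yf ⇑u) := by
        rw [hsdef, show (p-2)/2/2 = (p-2)/4 by ring]

/-! ### scaling machinery -/

lemma pdx_mul_scale (v : 𝓢2) (c : ℂ) (a b : ℝ) :
    pdx (fun z => c * v (a * z.1, b * z.2))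
      = fun z => (a : ℂ) * c * (Dx v) (a * z.1, b * z.2) := by
  funext z
  have h1 : HasDerivAt (fun t : ℝ => a * t) a z.1 := by
    simpa using (hasDerivAt_id z.1).const_mul a
  have hinner : HasDerivAt (fun t : ℝ => ((a * t, b * z.2) : ℝ × ℝ))
      ((a, 0) : ℝ × ℝ) z.1 := h1.prodMk (hasDerivAt_const _ _)
  have h2 := (v.differentiable.differentiableAt.hasFDerivAt
      (x := ((a * z.1, b * z.2) : ℝ × ℝ))).comp_hasDerivAt z.1 hinner
  have h3 := h2.const_mul c
  have h4 : (fderiv ℝ v ((a * z.1, b * z.2) : ℝ × ℝ)) ((a, 0) : ℝ × ℝ)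
      = a • ((fderiv ℝ v ((a * z.1, b * z.2) : ℝ × ℝ)) ((1, 0) : ℝ × ℝ)) := by
    rw [show ((a, (0:ℝ)) : ℝ × ℝ) = a • ((1, 0) : ℝ × ℝ) by simp [Prod.smul_def]]
    exact ContinuousLinearMap.map_smul _ _ _
  have h3' : HasDerivAt (fun t => c * v (a * t, b * z.2))
      (c * (fderiv ℝ (⇑v) ((a * z.1, b * z.2) : ℝ × ℝ)) ((a, 0) : ℝ × ℝ)) z.1 := h3
  show deriv (fun t => c * v (a * t, b * z.2)) z.1 = _
  rw [h3'.deriv, h4, Dx, LineDeriv.lineDerivOpCLM_apply, SchwartzMap.lineDerivOp_apply_eq_fderiv]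
  rw [Complex.real_smul]
  ring

lemma pdy_mul_scale (v : 𝓢2) (c : ℂ) (a b : ℝ) :
    pdy (fun z => c * v (a * z.1, b * z.2))
      = fun z => (b : ℂ) * c * (Dy v) (a * z.1, b * z.2) := by
  funext z
  have h1 : HasDerivAt (fun t : ℝ => b * t) b z.2 := by
    simpa using (hasDerivAt_id z.2).const_mul b
  have hinner : HasDerivAt (fun t : ℝ => ((a * z.1, b * t) : ℝ × ℝ))
      ((0, b) : ℝ × ℝ) z.2 := (hasDerivAt_const _ _).prodMk h1
  have h2 := (v.differentiable.differentiableAt.hasFDerivAt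
      (x := ((a * z.1, b * z.2) : ℝ × ℝ))).comp_hasDerivAt z.2 hinner
  have h3 := h2.const_mul c
  have h4 : (fderiv ℝ v ((a * z.1, b * z.2) : ℝ × ℝ)) ((0, b) : ℝ × ℝ)
      = b • ((fderiv ℝ v ((a * z.1, b * z.2) : ℝ × ℝ)) ((0, 1) : ℝ × ℝ)) := by
    rw [show (((0:ℝ), b) : ℝ × ℝ) = b • ((0, 1) : ℝ × ℝ) by simp [Prod.smul_def]]
    exact ContinuousLinearMap.map_smul _ _ _
  have h3' : HasDerivAt (fun t => c * v (a * z.1, b * t))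
      (c * (fderiv ℝ (⇑v) ((a * z.1, b * z.2) : ℝ × ℝ)) ((0, b) : ℝ × ℝ)) z.2 := h3
  show deriv (fun t => c * v (a * z.1, b * t)) z.2 = _
  rw [h3'.deriv, h4, Dy, LineDeriv.lineDerivOpCLM_apply, SchwartzMap.lineDerivOp_apply_eq_fderiv]
  rw [Complex.real_smul]
  ring

/-- the anisotropic dilation as a continuous linear equivalence -/
def scaleE (a b : ℝ) (ha : a ≠ 0) (hb : b ≠ 0) : (ℝ × ℝ) ≃L[ℝ] (ℝ × ℝ) :=
  ((LinearEquiv.smulOfNeZero ℝ ℝ a ha).prodCongr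
    (LinearEquiv.smulOfNeZero ℝ ℝ b hb)).toContinuousLinearEquiv

lemma scaleE_apply (a b : ℝ) (ha : a ≠ 0) (hb : b ≠ 0) (z : ℝ × ℝ) :
    scaleE a b ha hb z = (a * z.1, b * z.2) := rfl

/-- Schwartz scaled function -/
def scaleS (a b : ℝ) (ha : a ≠ 0) (hb : b ≠ 0) (u : 𝓢2) : 𝓢2 :=
  SchwartzMap.compCLMOfContinuousLinearEquiv ℝ (scaleE a b ha hb) u

lemma scaleS_coe (a b : ℝ) (ha : a ≠ 0) (hb : b ≠ 0) (u : 𝓢2) :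
    ⇑(scaleS a b ha hb u) = fun z : ℝ × ℝ => u (a * z.1, b * z.2) := rfl

/-- Schwartz representative of `uscale` -/
def uscaleS (l : ℝ) (hl : 0 < l) (u : 𝓢2) : 𝓢2 :=
  (((l ^ ((3:ℝ)/8) : ℝ)) : ℂ) •
    scaleS (l ^ ((1:ℝ)/2)) (l ^ ((1:ℝ)/4))
      (ne_of_gt (Real.rpow_pos_of_pos hl _)) (ne_of_gt (Real.rpow_pos_of_pos hl _)) u

lemma uscaleS_coe (l : ℝ) (hl : 0 < l) (u : 𝓢2) :
    ⇑(uscaleS l hl u) = uscale l ⇑u := by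
  funext z
  show (((l ^ ((3:ℝ)/8) : ℝ)) : ℂ) • (scaleS _ _ _ _ u) z = _
  rw [scaleS_coe]
  rw [uscale]
  simp [smul_eq_mul]

/-- change of variables for anisotropic dilations -/
lemma integral_scale (f : ℝ × ℝ → ℝ) {a b : ℝ} (ha : 0 < a) (hb : 0 < b)
    (hf : Integrable f) (hf2 : Integrable (fun z : ℝ × ℝ => f (a * z.1, b * z.2))) :
    ∫ z : ℝ × ℝ, f (a * z.1, b * z.2) = (a * b)⁻¹ * ∫ z, f z := by
  rw [integral_prod_eq _ hf2]
  have h2 : ∀ x : ℝ, (∫ y, f (a * x, b * y)) = |b⁻¹| * ∫ y, f (a * x, y) := by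
    intro x
    rw [MeasureTheory.Measure.integral_comp_mul_left (fun y => f (a * x, y)) b, smul_eq_mul]
  simp_rw [h2]
  rw [integral_const_mul]
  rw [MeasureTheory.Measure.integral_comp_mul_left (fun X => ∫ y, f (X, y)) a, smul_eq_mul]
  rw [← integral_prod_eq _ hf]
  rw [abs_of_pos (inv_pos.2 ha), abs_of_pos (inv_pos.2 hb), mul_inv]
  ring

/-! ### scaling identities -/

lemma Mf_uscale (u : 𝓢2) {l : ℝ} (hl : 0 < l) : Mf (uscale l ⇑u) = Mf ⇑u := by
  set a := l ^ ((1:ℝ)/2) with hadef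
  set b := l ^ ((1:ℝ)/4) with hbdef
  set c := l ^ ((3:ℝ)/8) with hcdef
  have ha : 0 < a := Real.rpow_pos_of_pos hl _
  have hb : 0 < b := Real.rpow_pos_of_pos hl _
  have hc : 0 < c := Real.rpow_pos_of_pos hl _
  have hW : ∀ z : ℝ × ℝ, ‖uscale l (⇑u) z‖ ^ 2 = c ^ 2 * ‖u (a * z.1, b * z.2)‖ ^ 2 := by
    intro z
    rw [uscale]
    rw [norm_mul, Complex.norm_real, Real.norm_eq_abs, abs_of_pos hc, mul_pow]
  rw [Mf]
  simp_rw [hW]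
  rw [integral_const_mul]
  have hf2 : Integrable (fun z : ℝ × ℝ => ‖u (a * z.1, b * z.2)‖ ^ 2) := by
    have := integrable_sq_norm (scaleS a b (ne_of_gt ha) (ne_of_gt hb) u)
    simpa [scaleS_coe] using this
  rw [integral_scale _ ha hb (integrable_sq_norm u) hf2]
  rw [Mf]
  have hab : a * b = l ^ ((3:ℝ)/4) := by
    rw [hadef, hbdef, ← Real.rpow_add hl]; norm_num
  have hc2 : c ^ 2 = l ^ ((3:ℝ)/4) := by
    rw [hcdef, ← Real.rpow_natCast (l ^ ((3:ℝ)/8)) 2, ← Real.rpow_mul hl.le]; norm_num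
  rw [hab, hc2, ← mul_assoc, mul_inv_cancel₀ (ne_of_gt (Real.rpow_pos_of_pos hl _)), one_mul]

lemma Pf_uscale (u : 𝓢2) {l p : ℝ} (hl : 0 < l) (hp : 1 ≤ p) :
    Pf p (uscale l ⇑u) = l ^ (3*(p-2)/8) * Pf p ⇑u := by
  set a := l ^ ((1:ℝ)/2) with hadef
  set b := l ^ ((1:ℝ)/4) with hbdef
  set c := l ^ ((3:ℝ)/8) with hcdef
  have ha : 0 < a := Real.rpow_pos_of_pos hl _
  have hb : 0 < b := Real.rpow_pos_of_pos hl _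
  have hc : 0 < c := Real.rpow_pos_of_pos hl _
  have hW : ∀ z : ℝ × ℝ, ‖uscale l (⇑u) z‖ ^ p = c ^ p * ‖u (a * z.1, b * z.2)‖ ^ p := by
    intro z
    rw [uscale]
    rw [norm_mul, Complex.norm_real, Real.norm_eq_abs, abs_of_pos hc,
      Real.mul_rpow hc.le (norm_nonneg _)]
  rw [Pf]
  simp_rw [hW]
  rw [integral_const_mul]
  have hf2 : Integrable (fun z : ℝ × ℝ => ‖u (a * z.1, b * z.2)‖ ^ p) := by
    have := integrable_rpow_norm (scaleS a b (ne_of_gt ha) (ne_of_gt hb) u) hp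
    simpa [scaleS_coe] using this
  rw [integral_scale _ ha hb (integrable_rpow_norm u hp) hf2]
  rw [Pf]
  have hab : a * b = l ^ ((3:ℝ)/4) := by
    rw [hadef, hbdef, ← Real.rpow_add hl]; norm_num
  have hcp : c ^ p = l ^ (3*p/8) := by
    rw [hcdef, ← Real.rpow_mul hl.le]; ring_nf
  rw [hab, hcp, ← Real.rpow_neg hl.le, ← mul_assoc, ← Real.rpow_add hl]
  ring_nf

lemma Xf_uscale (u : 𝓢2) {l : ℝ} (hl : 0 < l) : Xf (uscale l ⇑u) = l * Xf ⇑u := by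
  set a := l ^ ((1:ℝ)/2) with hadef
  set b := l ^ ((1:ℝ)/4) with hbdef
  set c := l ^ ((3:ℝ)/8) with hcdef
  have ha : 0 < a := Real.rpow_pos_of_pos hl _
  have hb : 0 < b := Real.rpow_pos_of_pos hl _
  have hc : 0 < c := Real.rpow_pos_of_pos hl _
  have hder : pdx (uscale l ⇑u)
      = fun z => (a : ℂ) * ((c : ℝ) : ℂ) * (Dx u) (a * z.1, b * z.2) :=
    pdx_mul_scale u (((c : ℝ)) : ℂ) a b
  rw [Xf, hder]
  have hW : ∀ z : ℝ × ℝ, ‖(a : ℂ) * ((c : ℝ) : ℂ) * (Dx u) (a * z.1, b * z.2)‖ ^ 2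
      = (a * c) ^ 2 * ‖(Dx u) (a * z.1, b * z.2)‖ ^ 2 := by
    intro z
    rw [norm_mul, norm_mul, Complex.norm_real, Complex.norm_real, Real.norm_eq_abs,
      Real.norm_eq_abs, abs_of_pos ha, abs_of_pos hc, mul_pow, mul_pow]
  simp_rw [hW]
  rw [integral_const_mul]
  have hf2 : Integrable (fun z : ℝ × ℝ => ‖(Dx u) (a * z.1, b * z.2)‖ ^ 2) := by
    have := integrable_sq_norm (scaleS a b (ne_of_gt ha) (ne_of_gt hb) (Dx u))
    simpa [scaleS_coe] using this
  rw [integral_scale _ ha hb (integrable_sq_norm (Dx u)) hf2]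
  have hX : (∫ z : ℝ × ℝ, ‖(Dx u) z‖ ^ 2) = Xf ⇑u := by rw [Xf, pdx_coe]
  rw [hX]
  have hab : a * b = l ^ ((3:ℝ)/4) := by
    rw [hadef, hbdef, ← Real.rpow_add hl]; norm_num
  have hac : (a * c) ^ 2 = l ^ ((7:ℝ)/4) := by
    rw [hadef, hcdef, ← Real.rpow_add hl, ← Real.rpow_natCast (l ^ _) 2,
      ← Real.rpow_mul hl.le]
    norm_num
  rw [hab, hac, ← Real.rpow_neg hl.le, ← mul_assoc, ← Real.rpow_add hl]
  norm_num

lemma Yf_uscale (u : 𝓢2) {l : ℝ} (hl : 0 < l) : Yf (uscale l ⇑u) = l * Yf ⇑u := by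
  set a := l ^ ((1:ℝ)/2) with hadef
  set b := l ^ ((1:ℝ)/4) with hbdef
  set c := l ^ ((3:ℝ)/8) with hcdef
  have ha : 0 < a := Real.rpow_pos_of_pos hl _
  have hb : 0 < b := Real.rpow_pos_of_pos hl _
  have hc : 0 < c := Real.rpow_pos_of_pos hl _
  have hder1 : pdy (uscale l ⇑u)
      = fun z => (b : ℂ) * ((c : ℝ) : ℂ) * (Dy u) (a * z.1, b * z.2) :=
    pdy_mul_scale u (((c : ℝ)) : ℂ) a b
  have hder2 : pdyy (uscale l ⇑u)
      = fun z => (b : ℂ) * ((b : ℂ) * ((c : ℝ) : ℂ)) * (Dy (Dy u)) (a * z.1, b * z.2) := by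
    rw [pdyy, hder1]
    exact pdy_mul_scale (Dy u) ((b : ℂ) * ((c : ℝ) : ℂ)) a b
  rw [Yf, hder2]
  have hW : ∀ z : ℝ × ℝ, ‖(b : ℂ) * ((b : ℂ) * ((c : ℝ) : ℂ)) * (Dy (Dy u)) (a * z.1, b * z.2)‖ ^ 2
      = (b * (b * c)) ^ 2 * ‖(Dy (Dy u)) (a * z.1, b * z.2)‖ ^ 2 := by
    intro z
    have hcast : ((b:ℂ) * ((b:ℂ) * ((c:ℝ):ℂ))) = (((b*(b*c) : ℝ)):ℂ) := by push_cast; ring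
    rw [hcast, norm_mul, Complex.norm_real, Real.norm_eq_abs,
      abs_of_pos (by positivity), mul_pow]
  simp_rw [hW]
  rw [integral_const_mul]
  have hf2 : Integrable (fun z : ℝ × ℝ => ‖(Dy (Dy u)) (a * z.1, b * z.2)‖ ^ 2) := by
    have := integrable_sq_norm (scaleS a b (ne_of_gt ha) (ne_of_gt hb) (Dy (Dy u)))
    simpa [scaleS_coe] using this
  rw [integral_scale _ ha hb (integrable_sq_norm (Dy (Dy u))) hf2]
  have hY : (∫ z : ℝ × ℝ, ‖(Dy (Dy u)) z‖ ^ 2) = Yf ⇑u := by rw [Yf, pdyy_coe]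
  rw [hY]
  have hab : a * b = l ^ ((3:ℝ)/4) := by
    rw [hadef, hbdef, ← Real.rpow_add hl]; norm_num
  have hbc : (b * (b * c)) ^ 2 = l ^ ((7:ℝ)/4) := by
    rw [hbdef, hcdef, ← Real.rpow_add hl, ← Real.rpow_add hl,
      ← Real.rpow_natCast (l ^ _) 2, ← Real.rpow_mul hl.le]
    norm_num
  rw [hab, hbc, ← Real.rpow_neg hl.le, ← mul_assoc, ← Real.rpow_add hl]
  norm_num

/-! ### sharp (bootstrapped) bound -/

lemma sharp_bound (u : 𝓢2) {p : ℝ} (hp1 : 2 < p) (hp2 : p < 14/3) :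
    Pf p ⇑u ≤ 2 * 4 ^ ((p-2)/2) * (Mf ⇑u) ^ (1 + (p-2)/8)
      * (Xf ⇑u + Yf ⇑u) ^ (3*(p-2)/8) := by
  set r : ℝ := (p-2)/8 with hrdef
  have hr0 : 0 < r := by rw [hrdef]; linarith
  have hp1' : (1:ℝ) ≤ p := by linarith
  set M := Mf ⇑u with hMdef
  set X := Xf ⇑u with hXdef
  set Y := Yf ⇑u with hYdef
  have hM0 : 0 ≤ M := Mf_nonneg _
  have hX0 : 0 ≤ X := Xf_nonneg _
  have hY0 : 0 ≤ Y := Yf_nonneg _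
  have hP0 : 0 ≤ Pf p ⇑u := Pf_nonneg _ _
  have hcrude0 := crude_bound u hp1 hp2
  rw [← hMdef, ← hXdef, ← hYdef] at hcrude0
  by_cases hM : M = 0
  · have h1 : Pf p ⇑u ≤ 0 := by
      rw [hM] at hcrude0
      rw [Real.zero_rpow (by intro hc; nlinarith : (p-2)/4 ≠ 0)] at hcrude0
      simpa using hcrude0
    have h2 : 2 * 4 ^ ((p-2)/2) * M ^ (1 + (p-2)/8) * (X + Y) ^ (3*(p-2)/8)
        = 0 := by
      rw [hM, Real.zero_rpow (by intro hc; nlinarith : 1 + (p-2)/8 ≠ 0)]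
      ring
    rw [h2]; exact h1
  by_cases hXY : X + Y = 0
  · have hX : X = 0 := by linarith
    have h1 : Pf p ⇑u ≤ 0 := by
      rw [hX] at hcrude0
      rw [Real.zero_rpow (by intro hc; nlinarith : (p-2)/4 ≠ 0)] at hcrude0
      simpa using hcrude0
    have h2 : 2 * 4 ^ ((p-2)/2) * M ^ (1 + (p-2)/8) * (X + Y) ^ (3*(p-2)/8)
        = 0 := by
      rw [hXY, Real.zero_rpow (by intro hc; nlinarith : 3*(p-2)/8 ≠ 0)]
      ring
    rw [h2]; exact h1
  -- main case
  have hM0' : 0 < M := lt_of_le_of_ne hM0 (Ne.symm hM)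
  have hG0 : 0 < X + Y := lt_of_le_of_ne (by linarith) (Ne.symm hXY)
  set G := X + Y with hGdef
  set μ := M / G with hμdef
  have hμ0 : 0 < μ := div_pos hM0' hG0
  have hcrude := crude_bound (uscaleS μ hμ0 u) hp1 hp2
  rw [uscaleS_coe μ hμ0 u, Mf_uscale u hμ0, Pf_uscale u hμ0 hp1',
    Xf_uscale u hμ0, Yf_uscale u hμ0, ← hMdef, ← hXdef, ← hYdef] at hcrude
  rw [show 3*(p-2)/8 = 3*r by rw [hrdef]; ring,
    show (p-2)/2 = 4*r by rw [hrdef]; ring,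
    show (p-2)/4 = 2*r by rw [hrdef]; ring] at hcrude
  rw [show 3*(p-2)/8 = 3*r by rw [hrdef]; ring,
    show (p-2)/2 = 4*r by rw [hrdef]; ring]
  -- hcrude : μ ^ (3*r) * Pf p u ≤ 4 ^ (4*r) * M ^ (2*r) * (μ * X) ^ (2*r) * (M + μ * Y)
  have b1 : (μ * X) ^ ((2:ℝ)*r) ≤ μ ^ ((2:ℝ)*r) * G ^ ((2:ℝ)*r) := by
    rw [Real.mul_rpow hμ0.le hX0]
    have : X ^ ((2:ℝ)*r) ≤ G ^ ((2:ℝ)*r) :=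
      Real.rpow_le_rpow hX0 (by rw [hGdef]; linarith) (by positivity)
    exact mul_le_mul_of_nonneg_left this (Real.rpow_nonneg hμ0.le _)
  have b2 : M + μ * Y ≤ 2 * M := by
    have hY' : μ * Y ≤ M := by
      rw [hμdef, div_mul_eq_mul_div, div_le_iff₀ hG0]
      have : Y ≤ G := by rw [hGdef]; linarith
      nlinarith
    linarith
  have step : μ ^ ((3:ℝ)*r) * Pf p ⇑u
      ≤ 4 ^ ((4:ℝ)*r) * M ^ ((2:ℝ)*r) * (μ ^ ((2:ℝ)*r) * G ^ ((2:ℝ)*r)) * (2 * M) := by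
    refine hcrude.trans ?_
    have n1 : (0:ℝ) ≤ 4 ^ ((4:ℝ)*r) := Real.rpow_nonneg (by norm_num) _
    have n2 : (0:ℝ) ≤ M ^ ((2:ℝ)*r) := Real.rpow_nonneg hM0 _
    have n3 : (0:ℝ) ≤ μ ^ ((2:ℝ)*r) * G ^ ((2:ℝ)*r) :=
      mul_nonneg (Real.rpow_nonneg hμ0.le _) (Real.rpow_nonneg hG0.le _)
    have n4 : (0:ℝ) ≤ M + μ * Y := by
      have := mul_nonneg hμ0.le hY0
      linarith
    calc 4 ^ ((4:ℝ)*r) * M ^ ((2:ℝ)*r) * (μ * X) ^ ((2:ℝ)*r) * (M + μ * Y)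
        ≤ 4 ^ ((4:ℝ)*r) * M ^ ((2:ℝ)*r) * (μ ^ ((2:ℝ)*r) * G ^ ((2:ℝ)*r)) * (M + μ * Y) := by
          exact mul_le_mul_of_nonneg_right
            (mul_le_mul_of_nonneg_left b1 (mul_nonneg n1 n2)) n4
      _ ≤ 4 ^ ((4:ℝ)*r) * M ^ ((2:ℝ)*r) * (μ ^ ((2:ℝ)*r) * G ^ ((2:ℝ)*r)) * (2 * M) := by
          exact mul_le_mul_of_nonneg_left b2 (mul_nonneg (mul_nonneg n1 n2) n3)
  -- multiply by μ ^ (-(3r))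
  have hstep2 : Pf p ⇑u ≤ μ ^ (-(3*r)) *
      (4 ^ ((4:ℝ)*r) * M ^ ((2:ℝ)*r) * (μ ^ ((2:ℝ)*r) * G ^ ((2:ℝ)*r)) * (2 * M)) := by
    have h := mul_le_mul_of_nonneg_left step (Real.rpow_nonneg hμ0.le (-(3*r)))
    rwa [← mul_assoc, ← Real.rpow_add hμ0, neg_add_cancel, Real.rpow_zero, one_mul] at h
  refine hstep2.trans_eq ?_
  -- now an identity in positive reals
  have hMG : ∀ e : ℝ, μ ^ e = M ^ e * (G ^ e)⁻¹ := by
    intro e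
    rw [hμdef, Real.div_rpow hM0'.le hG0.le, div_eq_mul_inv]
  rw [hMG, hMG]
  have mAll : M ^ (-(3*r)) * M ^ ((2:ℝ)*r) * M ^ ((2:ℝ)*r) * M = M ^ (1+r) := by
    rw [← Real.rpow_add hM0', ← Real.rpow_add hM0']
    have h := Real.rpow_add hM0' (-(3*r) + 2*r + 2*r) 1
    rw [Real.rpow_one] at h
    rw [← h, show -(3*r) + 2*r + 2*r + 1 = 1 + r by ring]
  have gAll : (G ^ (-(3*r)))⁻¹ * ((G ^ ((2:ℝ)*r))⁻¹ * G ^ ((2:ℝ)*r)) = G ^ ((3:ℝ)*r) := by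
    rw [inv_mul_cancel₀ (ne_of_gt (Real.rpow_pos_of_pos hG0 _)), mul_one,
      Real.rpow_neg hG0.le, inv_inv]
  calc M ^ (-(3*r)) * (G ^ (-(3*r)))⁻¹ *
        (4 ^ ((4:ℝ)*r) * M ^ ((2:ℝ)*r) * (M ^ ((2:ℝ)*r) * (G ^ ((2:ℝ)*r))⁻¹ * G ^ ((2:ℝ)*r)) * (2 * M))
      = (M ^ (-(3*r)) * M ^ ((2:ℝ)*r) * M ^ ((2:ℝ)*r) * M) *
        ((G ^ (-(3*r)))⁻¹ * ((G ^ ((2:ℝ)*r))⁻¹ * G ^ ((2:ℝ)*r))) * (2 * 4 ^ ((4:ℝ)*r)) := by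
        ring
    _ = 2 * 4 ^ ((4:ℝ)*r) * M ^ (1+r) * G ^ ((3:ℝ)*r) := by
        rw [mAll, gAll]; ring

/-! ### positivity of mass and potential -/

lemma exists_ne_zero (u : 𝓢2) (hu : u ≠ 0) : ∃ z, u z ≠ 0 := by
  by_contra h
  push_neg at h
  exact hu (DFunLike.ext _ _ fun z => by simpa using h z)

lemma Mf_pos (u : 𝓢2) (hu : u ≠ 0) : 0 < Mf ⇑u := by
  obtain ⟨z₀, hz₀⟩ := exists_ne_zero u hu
  rw [Mf]
  refine (integral_pos_iff_support_of_nonneg (fun z => by positivity)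
    (integrable_sq_norm u)).2 ?_
  have hc : Continuous fun z : ℝ × ℝ => ‖u z‖ ^ 2 := by fun_prop
  have hopen : IsOpen (Function.support fun z : ℝ × ℝ => ‖u z‖ ^ 2) := by
    have heq : (Function.support fun z : ℝ × ℝ => ‖u z‖ ^ 2)
        = (fun z : ℝ × ℝ => ‖u z‖ ^ 2) ⁻¹' ({0}ᶜ) := by
      ext z; simp [Function.mem_support]
    rw [heq]
    exact isOpen_compl_singleton.preimage hc
  refine hopen.measure_pos volume ⟨z₀, ?_⟩
  simp only [Function.mem_support]
  have hpos : 0 < ‖u z₀‖ := norm_pos_iff.2 hz₀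
  positivity

lemma Pf_pos (u : 𝓢2) {p : ℝ} (hp : 1 ≤ p) (hu : u ≠ 0) : 0 < Pf p ⇑u := by
  obtain ⟨z₀, hz₀⟩ := exists_ne_zero u hu
  rw [Pf]
  refine (integral_pos_iff_support_of_nonneg
    (fun z => Real.rpow_nonneg (norm_nonneg _) _)
    (integrable_rpow_norm u hp)).2 ?_
  have hc : Continuous fun z : ℝ × ℝ => ‖u z‖ ^ p :=
    u.continuous.norm.rpow_const (fun z => Or.inr (by positivity))
  have hopen : IsOpen (Function.support fun z : ℝ × ℝ => ‖u z‖ ^ p) := by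
    have heq : (Function.support fun z : ℝ × ℝ => ‖u z‖ ^ p)
        = (fun z : ℝ × ℝ => ‖u z‖ ^ p) ⁻¹' ({0}ᶜ) := by
      ext z; simp [Function.mem_support]
    rw [heq]
    exact isOpen_compl_singleton.preimage hc
  refine hopen.measure_pos volume ⟨z₀, ?_⟩
  simp only [Function.mem_support]
  have : 0 < ‖u z₀‖ := norm_pos_iff.2 hz₀
  positivity

/-! ### part 1 : negative energy for small scalings -/

lemma neg_energy {p : ℝ} (hp1 : 2 < p) (hp2 : p < 14/3) (u : 𝓢2) (hu : u ≠ 0) :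
    ∃ l₀ > (0:ℝ), ∀ l : ℝ, 0 < l → l < l₀ → Ef p (uscale l ⇑u) < 0 := by
  have hp0 : (0:ℝ) < p := by linarith
  have hp1' : (1:ℝ) ≤ p := by linarith
  set α : ℝ := 3*(p-2)/8 with hαdef
  have hα0 : 0 < α := by rw [hαdef]; linarith
  have hα1 : α < 1 := by rw [hαdef]; linarith
  set B : ℝ := Pf p ⇑u / p with hBdef
  have hB0 : 0 < B := div_pos (Pf_pos u hp1' hu) hp0
  set h : ℝ := (Xf ⇑u + Yf ⇑u) / 2 with hhdef
  have hh0 : 0 ≤ h := by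
    have := Xf_nonneg ⇑u; have := Yf_nonneg ⇑u
    rw [hhdef]; linarith
  refine ⟨(B/(h+1)) ^ ((1:ℝ)/(1-α)), Real.rpow_pos_of_pos (by positivity) _, ?_⟩
  intro l hl0 hll
  have hEf : Ef p (uscale l ⇑u) = l * Xf ⇑u / 2 + l * Yf ⇑u / 2 - l ^ α * B := by
    rw [Ef, Xf_uscale u hl0, Yf_uscale u hl0, Pf_uscale u hl0 hp1', hBdef, hαdef]
    ring
  have hkey : l ^ ((1:ℝ)-α) * h < B := by
    have h1 : l ^ ((1:ℝ)-α) < ((B/(h+1)) ^ ((1:ℝ)/(1-α))) ^ ((1:ℝ)-α) :=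
      Real.rpow_lt_rpow hl0.le hll (by linarith)
    have h2 : ((B/(h+1)) ^ ((1:ℝ)/(1-α))) ^ ((1:ℝ)-α) = B/(h+1) := by
      rw [← Real.rpow_mul (by positivity)]
      rw [one_div_mul_cancel (by linarith : (1:ℝ)-α ≠ 0)]
      exact Real.rpow_one _
    rw [h2] at h1
    have h3 : l ^ ((1:ℝ)-α) * h ≤ B/(h+1) * h :=
      mul_le_mul_of_nonneg_right h1.le hh0
    have h4 : B/(h+1) * h < B := by
      rw [div_mul_eq_mul_div, div_lt_iff₀ (by linarith)]
      nlinarith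
    linarith
  have hle : l ^ α * l ^ ((1:ℝ)-α) = l := by
    rw [← Real.rpow_add hl0, show α + (1-α) = 1 by ring, Real.rpow_one]
  have hfact : l * Xf ⇑u / 2 + l * Yf ⇑u / 2 - l ^ α * B
      = l ^ α * (l ^ ((1:ℝ)-α) * h - B) := by
    rw [hhdef]
    linear_combination (-(Xf ⇑u + Yf ⇑u)/2) * hle
  rw [hEf, hfact]
  exact mul_neg_of_pos_of_neg (Real.rpow_pos_of_pos hl0 _) (by linarith)

/-! ### lower bound for the constrained energy -/

lemma ef_lower_bound {p : ℝ} (hp1 : 2 < p) (hp2 : p < 14/3) (c : ℝ) (hc : 0 < c) :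
    ∃ K : ℝ, ∀ v : 𝓢2, Mf ⇑v = c → -K ≤ Ef p ⇑v := by
  have hp0 : (0:ℝ) < p := by linarith
  set θ : ℝ := 3*(p-2)/8 with hθdef
  have hθ0 : 0 < θ := by rw [hθdef]; linarith
  have hθ1 : θ < 1 := by rw [hθdef]; linarith
  set D : ℝ := 2 * 4 ^ ((p-2)/2) * c ^ (1 + (p-2)/8) with hDdef
  have hD0 : 0 < D := by
    rw [hDdef]
    have : (0:ℝ) < 4 ^ ((p-2)/2) := Real.rpow_pos_of_pos (by norm_num) _
    have : (0:ℝ) < c ^ (1 + (p-2)/8) := Real.rpow_pos_of_pos hc _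
    positivity
  set R : ℝ := D / p with hRdef
  have hR0 : 0 < R := div_pos hD0 hp0
  set T : ℝ := (2*R) ^ ((1:ℝ)/(1-θ)) with hTdef
  have hT0 : 0 < T := Real.rpow_pos_of_pos (by linarith) _
  refine ⟨R * T ^ θ, ?_⟩
  intro v hMv
  have hsharp := sharp_bound v hp1 hp2
  rw [hMv] at hsharp
  set t : ℝ := Xf ⇑v + Yf ⇑v with htdef
  have ht0 : 0 ≤ t := by
    have := Xf_nonneg ⇑v; have := Yf_nonneg ⇑v
    rw [htdef]; linarith
  have hsharp' : Pf p ⇑v ≤ D * t ^ θ := hsharp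
  have hR' : Pf p ⇑v / p ≤ R * t ^ θ := by
    rw [hRdef, div_mul_eq_mul_div]
    gcongr
  have claim : R * t ^ θ ≤ t/2 + R * T ^ θ := by
    rcases le_or_gt t T with hcase | hcase
    · have h1 : t ^ θ ≤ T ^ θ := Real.rpow_le_rpow ht0 hcase hθ0.le
      nlinarith
    · have htpos : 0 < t := hT0.trans hcase
      have hsplit : t ^ θ = t ^ (θ-1) * t := by
        have h := Real.rpow_add htpos (θ-1) 1
        rw [Real.rpow_one, show θ-1+1 = θ by ring] at h
        exact h
      have hTe : T ^ ((1:ℝ)-θ) = 2*R := by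
        rw [hTdef, ← Real.rpow_mul (by linarith : (0:ℝ) ≤ 2*R),
          one_div_mul_cancel (by linarith : (1:ℝ)-θ ≠ 0), Real.rpow_one]
      have hmono : T ^ ((1:ℝ)-θ) ≤ t ^ ((1:ℝ)-θ) :=
        Real.rpow_le_rpow hT0.le hcase.le (by linarith)
      rw [hTe] at hmono
      have hneg : t ^ (θ-1) ≤ (2*R)⁻¹ := by
        rw [show θ-1 = -(1-θ) by ring, Real.rpow_neg htpos.le]
        exact inv_anti₀ (by linarith) hmono
      have h2 : R * t ^ θ ≤ t/2 := by
        rw [hsplit, ← mul_assoc]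
        have h3 : R * t ^ (θ-1) ≤ R * (2*R)⁻¹ :=
          mul_le_mul_of_nonneg_left hneg hR0.le
        have h4 : R * (2*R)⁻¹ = 1/2 := by
          field_simp
        rw [h4] at h3
        have := mul_le_mul_of_nonneg_right h3 htpos.le
        linarith
      have h5 : 0 ≤ R * T ^ θ := by positivity
      linarith
  have hEf : Ef p ⇑v = Xf ⇑v / 2 + Yf ⇑v / 2 - Pf p ⇑v / p := rfl
  rw [hEf]
  have : t/2 - R * t ^ θ ≥ -(R * T ^ θ) := by linarith
  rw [htdef] at this
  linarith

/-! ### existence of a constrained element with negative energy -/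

lemma exists_neg_element {p : ℝ} (hp1 : 2 < p) (hp2 : p < 14/3)
    (u : 𝓢2) (hu : u ≠ 0) (c : ℝ) (hc : 0 < c) :
    ∃ v : 𝓢2, Mf ⇑v = c ∧ Ef p ⇑v < 0 := by
  have hMu : 0 < Mf ⇑u := Mf_pos u hu
  set t : ℝ := Real.sqrt (c / Mf ⇑u) with htdef
  have ht0 : 0 < t := Real.sqrt_pos.2 (div_pos hc hMu)
  set w : 𝓢2 := t • u with hwdef
  have hMw : Mf ⇑w = c := by
    rw [Mf]
    have hnorm : ∀ z : ℝ × ℝ, ‖w z‖ ^ 2 = t ^ 2 * ‖u z‖ ^ 2 := by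
      intro z
      rw [hwdef]
      show ‖(t • u) z‖ ^ 2 = _
      rw [SchwartzMap.smul_apply, norm_smul, Real.norm_eq_abs, abs_of_pos ht0, mul_pow]
    simp_rw [hnorm]
    rw [integral_const_mul]
    have : (∫ z : ℝ × ℝ, ‖u z‖ ^ 2) = Mf ⇑u := rfl
    rw [this, htdef, Real.sq_sqrt (div_nonneg hc.le hMu.le),
      div_mul_cancel₀ c (ne_of_gt hMu)]
  have hw0 : w ≠ 0 := by
    rw [hwdef]
    exact smul_ne_zero (ne_of_gt ht0) hu
  obtain ⟨l₀, hl₀, hneg⟩ := neg_energy hp1 hp2 w hw0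
  have hl : 0 < l₀/2 := by linarith
  refine ⟨uscaleS (l₀/2) hl w, ?_, ?_⟩
  · rw [uscaleS_coe, Mf_uscale w hl, hMw]
  · rw [uscaleS_coe]
    exact hneg (l₀/2) hl (by linarith)

end Helpers

end

/-- Negative energy for small scalings, and negativity of the constrained infimum. -/
theorem stmt_11 (p : ℝ) (hp1 : 2 < p) (hp2 : p < 14 / 3)
    (u : SchwartzMap (ℝ × ℝ) ℂ) (hu : u ≠ 0) :
    (∃ l₀ > (0 : ℝ), ∀ l : ℝ, 0 < l → l < l₀ → Ef p (uscale l (fun z => u z)) < 0)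
      ∧ ∀ c > (0 : ℝ),
          sInf {e : ℝ | ∃ v : SchwartzMap (ℝ × ℝ) ℂ,
            Mf (fun z => v z) = c ∧ Ef p (fun z => v z) = e} < 0 := by
  constructor
  · exact Helpers.neg_energy hp1 hp2 u hu
  · intro c hc
    obtain ⟨v, hMv, hEv⟩ := Helpers.exists_neg_element hp1 hp2 u hu c hc
    obtain ⟨K, hK⟩ := Helpers.ef_lower_bound hp1 hp2 c hc
    have hmem : Ef p (fun z => v z) ∈ {e : ℝ | ∃ v' : SchwartzMap (ℝ × ℝ) ℂ,
        Mf (fun z => v' z) = c ∧ Ef p (fun z => v' z) = e} := ⟨v, hMv, rfl⟩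
    have hbdd : BddBelow {e : ℝ | ∃ v' : SchwartzMap (ℝ × ℝ) ℂ,
        Mf (fun z => v' z) = c ∧ Ef p (fun z => v' z) = e} := by
      refine ⟨-K, ?_⟩
      rintro e ⟨v', hM', rfl⟩
      exact hK v' hM'
    exact lt_of_le_of_lt (csInf_le hbdd hmem) hEv
end
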